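/- arXiv:2004.08872 — 7 statements merged into one kernel-verified Lean document; each statement's English description precedes it below -/
import Mathlib

section
/- Let n1, n2, n3 be positive integers and A ∈ ℝ^{n1×n2×n3}. Then (F_{n3} ⊗ I_{n1}) · bcirc(A) · (F_{n3}^{-1} ⊗ I_{n2}) = bdiag(Â), i.e. conjugating the block circulant matrix of A by the Kronecker products of the DFT matrix with identity matrices yields the block diagonal matrix whose diagonal blocks are the frontal slices Â^{(1)}, …, Â^{(n3)} of the third-mode DFT of A. -/
open scoped BigOperators Matrix Kronecker ComplexConjugate
open Complex

/-- A third-order tensor of size `n1 × n2 × n3` with entries in `R`. -/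
abbrev T3 (n1 n2 n3 : ℕ) (R : Type*) : Type _ := Fin n1 → Fin n2 → Fin n3 → R

namespace T3

variable {n1 n2 n3 l : ℕ}

/-- The Frobenius inner product `⟨A,B⟩ = Σ_{i,j,k} A_{ijk} B_{ijk}`. -/
def tInner (A B : T3 n1 n2 n3 ℝ) : ℝ := ∑ i, ∑ j, ∑ k, A i j k * B i j k

/-- The Frobenius norm `‖A‖_F = √⟨A,A⟩`. -/
noncomputable def tNorm (A : T3 n1 n2 n3 ℝ) : ℝ := Real.sqrt (tInner A A)

/-- The `n × n` DFT matrix, `(F_n)_{ab} = ω^{ab}` (0-based), `ω = exp(-2πi/n)`. -/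
noncomputable def dftMatrix (n : ℕ) : Matrix (Fin n) (Fin n) ℂ :=
  fun a b => Complex.exp (-(2 * (Real.pi : ℂ) * Complex.I) / (n : ℂ)) ^ ((a : ℕ) * (b : ℕ))

/-- The `k`-th frontal slice `Â^{(k)}` of the DFT of `A` along the third dimension:
`Â(i,j,:) = F_{n3} · A(i,j,:)`. -/
noncomputable def hatSlice (A : T3 n1 n2 n3 ℝ) (k : Fin n3) : Matrix (Fin n1) (Fin n2) ℂ :=
  fun i j => ∑ m : Fin n3, dftMatrix n3 k m * (A i j m : ℂ)

/-- The block circulant matrix of `A`: the `(p,q)` block (0-based) is the frontal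
slice `A^{(p-q mod n3)}`. -/
def bcirc (A : T3 n1 n2 n3 ℝ) : Matrix (Fin n3 × Fin n1) (Fin n3 × Fin n2) ℝ :=
  fun p q => A p.2 q.2 (p.1 - q.1)

/-- The block diagonal matrix with diagonal blocks `Â^{(1)}, …, Â^{(n3)}`. -/
noncomputable def bdiag (A : T3 n1 n2 n3 ℝ) : Matrix (Fin n3 × Fin n1) (Fin n3 × Fin n2) ℂ :=
  fun p q => if p.1 = q.1 then hatSlice A p.1 p.2 q.2 else 0

/-- t-product: `(A*B)^{(k)} = Σ_q A^{(k-q mod n3)} B^{(q)}` (circular convolution of slices). -/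
def tprod (A : T3 n1 n2 n3 ℝ) (B : T3 n2 l n3 ℝ) : T3 n1 l n3 ℝ :=
  fun i j k => ∑ q : Fin n3, ∑ p : Fin n2, A i p (k - q) * B p j q

/-- Tensor transpose: `(Aᵀ)^{(k)} = (A^{(-k mod n3)})ᵀ`. -/
def tT (A : T3 n1 n2 n3 ℝ) : T3 n2 n1 n3 ℝ := fun j i k => A i j (-k)

/-- The identity tensor: first frontal slice the identity matrix, other slices zero. -/
def tI (q m : ℕ) : T3 q q m ℝ := fun i j k => if i = j ∧ (k : ℕ) = 0 then 1 else 0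

/-- An orthogonal tensor: `Qᵀ * Q = Q * Qᵀ = I`. -/
def TOrth {n m : ℕ} (Q : T3 n n m ℝ) : Prop :=
  tprod (tT Q) Q = tI n m ∧ tprod Q (tT Q) = tI n m

/-- A partially orthogonal tensor: `Qᵀ * Q = I`. -/
def PartOrth {n q m : ℕ} (Q : T3 n q m ℝ) : Prop := tprod (tT Q) Q = tI q m

/-- f-diagonal tensor: every frontal slice is a diagonal matrix. -/
def FDiag (S : T3 n1 n2 n3 ℝ) : Prop :=
  ∀ (i : Fin n1) (j : Fin n2) (k : Fin n3), (i : ℕ) ≠ (j : ℕ) → S i j k = 0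

/-- Every Fourier-domain frontal slice of `S` has real, nonnegative, nonincreasing
diagonal entries. -/
def OrderedDiag (S : T3 n1 n2 n3 ℝ) : Prop :=
  ∀ k : Fin n3,
    (∀ (i : Fin n1) (j : Fin n2), (i : ℕ) = (j : ℕ) →
      (hatSlice S k i j).im = 0 ∧ 0 ≤ (hatSlice S k i j).re) ∧
    (∀ (i i' : Fin n1) (j j' : Fin n2), (i : ℕ) = (j : ℕ) → (i' : ℕ) = (j' : ℕ) →
      (i : ℕ) ≤ (i' : ℕ) → (hatSlice S k i' j').re ≤ (hatSlice S k i j).re)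

/-- A t-SVD of `A`: `A = U * S * Vᵀ` with `U, V` orthogonal and `S` f-diagonal. -/
def IsTSVD (A : T3 n1 n2 n3 ℝ) (U : T3 n1 n1 n3 ℝ) (S : T3 n1 n2 n3 ℝ)
    (V : T3 n2 n2 n3 ℝ) : Prop :=
  TOrth U ∧ TOrth V ∧ FDiag S ∧ A = tprod (tprod U S) (tT V)

/-- An ordered t-SVD. -/
def IsOrderedTSVD (A : T3 n1 n2 n3 ℝ) (U : T3 n1 n1 n3 ℝ) (S : T3 n1 n2 n3 ℝ)
    (V : T3 n2 n2 n3 ℝ) : Prop :=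
  IsTSVD A U S V ∧ OrderedDiag S

/-- Lateral slice `U(:,i,:)` as an `n1 × 1 × n3` tensor. -/
def lat (U : T3 n1 n2 n3 ℝ) (i : Fin n2) : T3 n1 1 n3 ℝ := fun a _ k => U a i k

/-- Tube `S(i,j,:)` as a `1 × 1 × n3` tensor. -/
def tube (S : T3 n1 n2 n3 ℝ) (i : Fin n1) (j : Fin n2) : T3 1 1 n3 ℝ := fun _ _ k => S i j k

/-- The rank-one term `U(:,i,:) * S(i,j,:) * V(:,j,:)ᵀ`. -/
def rankOne (U : T3 n1 n1 n3 ℝ) (S : T3 n1 n2 n3 ℝ) (V : T3 n2 n2 n3 ℝ)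
    (i : Fin n1) (j : Fin n2) : T3 n1 n2 n3 ℝ :=
  tprod (tprod (lat U i) (tube S i j)) (tT (lat V j))

/-- The normalized leading rank-one tensor
`M₁ = U(:,1,:) * (S(1,1,:)/‖S(1,1,:)‖_F) * V(:,1,:)ᵀ`. -/
noncomputable def leadM (hn1 : 0 < n1) (hn2 : 0 < n2) (U : T3 n1 n1 n3 ℝ)
    (S : T3 n1 n2 n3 ℝ) (V : T3 n2 n2 n3 ℝ) : T3 n1 n2 n3 ℝ :=
  tprod (tprod (lat U ⟨0, hn1⟩)
      (fun _ _ k => S ⟨0, hn1⟩ ⟨0, hn2⟩ k / tNorm (tube S ⟨0, hn1⟩ ⟨0, hn2⟩)))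
    (tT (lat V ⟨0, hn2⟩))

/-- `‖Y‖_{1,F}`: the maximal Euclidean norm of a column fiber of a frontal slice of `Ŷ`. -/
noncomputable def norm1F (Y : T3 n1 n2 n3 ℝ) : ℝ :=
  ⨆ p : Fin n2 × Fin n3, Real.sqrt (∑ i, ‖hatSlice Y p.2 i p.1‖ ^ 2)

/-- The tubal rank: the maximal rank of a frontal slice of the third-mode DFT. -/
noncomputable def tubalRank (X : T3 n1 n2 n3 ℝ) : ℕ :=
  Finset.univ.sup fun k : Fin n3 => (hatSlice X k).rank

end T3

open T3

lemma omega_pow (n : ℕ) (hn : 0 < n) :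
    Complex.exp (-(2 * (Real.pi : ℂ) * Complex.I) / (n : ℂ)) ^ n = 1 := by
  rw [← Complex.exp_nat_mul, mul_div_cancel₀ _ (Nat.cast_ne_zero.mpr hn.ne' : (n:ℂ) ≠ 0),
    Complex.exp_neg, Complex.exp_two_pi_mul_I, inv_one]

lemma omega_prim (n : ℕ) (hn : 0 < n) :
    IsPrimitiveRoot (Complex.exp (-(2 * (Real.pi : ℂ) * Complex.I) / (n : ℂ))) n := by
  have := (Complex.isPrimitiveRoot_exp n hn.ne').inv
  rwa [← Complex.exp_neg, ← neg_div] at this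

lemma omega_mul_conj (n : ℕ) :
    Complex.exp (-(2 * (Real.pi : ℂ) * Complex.I) / (n : ℂ)) *
      star (Complex.exp (-(2 * (Real.pi : ℂ) * Complex.I) / (n : ℂ))) = 1 := by
  rw [show star (Complex.exp (-(2 * (Real.pi : ℂ) * Complex.I) / (n : ℂ))) = (starRingEnd ℂ) (Complex.exp (-(2 * (Real.pi : ℂ) * Complex.I) / (n : ℂ))) from rfl]
  rw [← Complex.exp_conj, ← Complex.exp_add]
  have : (starRingEnd ℂ) (-(2 * (Real.pi : ℂ) * Complex.I) / (n : ℂ)) =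
      -(-(2 * (Real.pi : ℂ) * Complex.I) / (n : ℂ)) := by
    simp [map_div₀, Complex.conj_I, Complex.conj_ofReal, map_ofNat]
    ring
  rw [this, add_neg_cancel, Complex.exp_zero]

lemma dft_add (n : ℕ) (p x m : Fin n) :
    T3.dftMatrix n p (x + m) = T3.dftMatrix n p x * T3.dftMatrix n p m := by
  have hn : 0 < n := p.pos
  set ω := Complex.exp (-(2 * (Real.pi : ℂ) * Complex.I) / (n : ℂ)) with hω
  have hωn : (ω ^ (p : ℕ)) ^ n = 1 := by
    rw [← pow_mul, mul_comm, pow_mul, omega_pow n hn, one_pow]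
  show ω ^ ((p : ℕ) * ((x + m : Fin n) : ℕ)) = ω ^ ((p:ℕ)*(x:ℕ)) * ω ^ ((p:ℕ)*(m:ℕ))
  rw [pow_mul, pow_mul, pow_mul, Fin.val_add, ← pow_eq_pow_mod _ hωn, pow_add]

lemma dft_orth (n : ℕ) (p q : Fin n) :
    ∑ t : Fin n, T3.dftMatrix n p t * star (T3.dftMatrix n q t) = if p = q then (n : ℂ) else 0 := by
  have hn : 0 < n := p.pos
  set ω := Complex.exp (-(2 * (Real.pi : ℂ) * Complex.I) / (n : ℂ)) with hω
  have key : ∀ t : Fin n, T3.dftMatrix n p t * star (T3.dftMatrix n q t)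
      = (ω ^ (p : ℕ) * (star ω) ^ (q : ℕ)) ^ (t : ℕ) := by
    intro t
    show ω ^ ((p:ℕ)*(t:ℕ)) * star (ω ^ ((q:ℕ)*(t:ℕ))) = _
    rw [star_pow, mul_pow, pow_mul, pow_mul]
  simp only [key]
  set x := ω ^ (p : ℕ) * (star ω) ^ (q : ℕ) with hx
  by_cases hpq : p = q
  · subst hpq
    have : x = 1 := by rw [hx, ← mul_pow, omega_mul_conj n, one_pow]
    simp [this, Fin.sum_univ_eq_sum_range, Finset.sum_const, hn]
  · rw [if_neg hpq]
    have hω0 : ω ≠ 0 := Complex.exp_ne_zero _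
    have hstar : star ω = ω⁻¹ := by
      field_simp
      rw [mul_comm]; exact omega_mul_conj n
    have hx1 : x ≠ 1 := by
      rw [hx, hstar, inv_pow]
      intro h
      have : ω ^ (p : ℕ) = ω ^ (q : ℕ) := by
        field_simp at h
        exact h
      exact hpq (Fin.ext ((omega_prim n hn).pow_inj p.isLt q.isLt this))
    have hxn : x ^ n = 1 := by
      rw [hx, mul_pow, ← pow_mul, mul_comm (p:ℕ), pow_mul, omega_pow n hn, one_pow,
        ← pow_mul, mul_comm (q:ℕ), pow_mul, ← star_pow, omega_pow n hn]
      simp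
    rw [Fin.sum_univ_eq_sum_range, geom_sum_eq hx1, hxn, sub_self, zero_div]

/-- `(F_{n3} ⊗ I_{n1}) · bcirc(A) · (F_{n3}⁻¹ ⊗ I_{n2}) = bdiag(Â)`. -/
theorem stmt_0 (n1 n2 n3 : ℕ) (hn1 : 0 < n1) (hn2 : 0 < n2) (hn3 : 0 < n3)
    (A : T3 n1 n2 n3 ℝ) :
    (dftMatrix n3 ⊗ₖ (1 : Matrix (Fin n1) (Fin n1) ℂ)) *
        (bcirc A).map (fun x => (x : ℂ)) *
        ((((n3 : ℂ))⁻¹ • (dftMatrix n3)ᴴ) ⊗ₖ (1 : Matrix (Fin n2) (Fin n2) ℂ)) =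
      bdiag A := by
  haveI : NeZero n3 := ⟨hn3.ne'⟩
  ext ⟨p, i⟩ ⟨q, j⟩
  simp only [Matrix.mul_apply, Matrix.kroneckerMap_apply, Matrix.one_apply, Matrix.map_apply,
    Matrix.smul_apply, smul_eq_mul, Fintype.sum_prod_type, Matrix.conjTranspose_apply, bcirc, bdiag]
  simp only [mul_ite, ite_mul, mul_one, mul_zero, zero_mul, one_mul, Finset.sum_ite_eq,
    Finset.sum_ite_eq', Finset.mem_univ, if_true]
  have reindex : ∀ x : Fin n3, ∑ r : Fin n3, T3.dftMatrix n3 p r * ((A i j (r - x) : ℝ) : ℂ)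
      = ∑ m : Fin n3, T3.dftMatrix n3 p x * T3.dftMatrix n3 p m * ((A i j m : ℝ) : ℂ) := by
    intro x
    rw [← Equiv.sum_comp (Equiv.addLeft x)
      (fun r => T3.dftMatrix n3 p r * ((A i j (r - x) : ℝ) : ℂ))]
    refine Finset.sum_congr rfl fun m _ => ?_
    simp only [Equiv.coe_addLeft]
    rw [dft_add, add_sub_cancel_left]
  have step : ∀ x : Fin n3,
      (∑ m : Fin n3, T3.dftMatrix n3 p x * T3.dftMatrix n3 p m * ((A i j m : ℝ) : ℂ)) *
          ((n3 : ℂ)⁻¹ * star (T3.dftMatrix n3 q x))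
      = (n3 : ℂ)⁻¹ * (T3.dftMatrix n3 p x * star (T3.dftMatrix n3 q x)) *
          ∑ m : Fin n3, T3.dftMatrix n3 p m * ((A i j m : ℝ) : ℂ) := by
    intro x
    rw [Finset.sum_mul, Finset.mul_sum]
    exact Finset.sum_congr rfl fun m _ => by ring
  simp only [reindex, step]
  rw [← Finset.sum_mul, ← Finset.mul_sum, dft_orth]
  by_cases hpq : p = q
  · subst hpq
    rw [if_pos rfl, if_pos rfl, inv_mul_cancel₀ (Nat.cast_ne_zero.mpr hn3.ne' : (n3:ℂ) ≠ 0),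
      one_mul]
    rfl
  · simp [hpq]
end

section
/- (t-SVD existence) Every tensor A ∈ ℝ^{n1×n2×n3} can be factored as A = U * S * V^T, where U ∈ ℝ^{n1×n1×n3} and V ∈ ℝ^{n2×n2×n3} are orthogonal tensors and S ∈ ℝ^{n1×n2×n3} is f-diagonal; moreover the factorization can be chosen ordered, i.e. so that for each k the Fourier-domain frontal slice Ŝ^{(k)} is diagonal with real, nonnegative, nonincreasing diagonal entries. -/
open scoped BigOperators Matrix Kronecker ComplexConjugate
open Complex

open T3

section SVD

open Matrix Finset

variable {𝕜 : Type*} [RCLike 𝕜]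

/-- SVD existence over an RCLike field, with sorted singular values. -/
theorem svd_exists (n1 n2 : ℕ) (M : Matrix (Fin n1) (Fin n2) 𝕜) :
    ∃ (U : Matrix (Fin n1) (Fin n1) 𝕜) (s : Fin n1 → Fin n2 → ℝ)
      (V : Matrix (Fin n2) (Fin n2) 𝕜),
      Uᴴ * U = 1 ∧ U * Uᴴ = 1 ∧ Vᴴ * V = 1 ∧ V * Vᴴ = 1 ∧
      (∀ (i : Fin n1) (j : Fin n2), (i : ℕ) ≠ (j : ℕ) → s i j = 0) ∧
      (∀ (i : Fin n1) (j : Fin n2), 0 ≤ s i j) ∧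
      (∀ (i i' : Fin n1) (j j' : Fin n2), (i : ℕ) = (j : ℕ) → (i' : ℕ) = (j' : ℕ) →
        (i : ℕ) ≤ (i' : ℕ) → s i' j' ≤ s i j) ∧
      M = U * (Matrix.of fun i j => ((s i j : ℝ) : 𝕜)) * Vᴴ := by
  classical
  have hB : (Mᴴ * M).IsHermitian := isHermitian_conjTranspose_mul_self M
  set V₀ : Matrix (Fin n2) (Fin n2) 𝕜 := (hB.eigenvectorUnitary : Matrix (Fin n2) (Fin n2) 𝕜)
    with hV₀
  have hV₀mem := hB.eigenvectorUnitary.2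
  have hV₀u : V₀ᴴ * V₀ = 1 := by
    have := (Matrix.mem_unitaryGroup_iff'.mp hV₀mem)
    simpa [Matrix.star_eq_conjTranspose] using this
  have hV₀u' : V₀ * V₀ᴴ = 1 := by
    have := (Matrix.mem_unitaryGroup_iff.mp hV₀mem)
    simpa [Matrix.star_eq_conjTranspose] using this
  set ev := hB.eigenvalues with hev
  set σ : Equiv.Perm (Fin n2) := Tuple.sort (fun i => -(ev i)) with hσ
  have hmono : Monotone ((fun i => -(ev i)) ∘ σ) := Tuple.monotone_sort _
  set e : Fin n2 → ℝ := fun j => ev (σ j) with hedef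
  have hanti : ∀ a b : Fin n2, a ≤ b → e b ≤ e a := by
    intro a b hab
    have := hmono hab
    simp only [Function.comp_apply, neg_le_neg_iff] at this
    simpa [hedef] using this
  have he0 : ∀ j, 0 ≤ e j := fun j =>
    Matrix.eigenvalues_conjTranspose_mul_self_nonneg M _
  set V : Matrix (Fin n2) (Fin n2) 𝕜 := Matrix.of (fun a b => V₀ a (σ b)) with hVdef
  have hVV : Vᴴ * V = 1 := by
    ext a b
    have h1 := congrFun (congrFun hV₀u (σ a)) (σ b)
    simp only [mul_apply, conjTranspose_apply] at h1 ⊢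
    simp only [hVdef, Matrix.of_apply]
    rw [h1]
    simp [Matrix.one_apply, Equiv.apply_eq_iff_eq]
  have hVV' : V * Vᴴ = 1 := by
    ext a b
    have h1 := congrFun (congrFun hV₀u' a) b
    simp only [mul_apply, conjTranspose_apply] at h1 ⊢
    simp only [hVdef, Matrix.of_apply]
    rw [← h1]
    exact Fintype.sum_equiv σ _ _ (fun j => rfl)
  have entry_form : ∀ (W : Matrix (Fin n2) (Fin n2) 𝕜) (f : Fin n2 → 𝕜) (a b : Fin n2),
      (W * diagonal f * Wᴴ) a b = ∑ j, W a j * f j * star (W b j) := by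
    intro W f a b
    rw [mul_apply]
    refine Finset.sum_congr rfl fun j _ => ?_
    rw [mul_diagonal, conjTranspose_apply]
  have hMM : Mᴴ * M = V * diagonal (fun j => ((e j : ℝ) : 𝕜)) * Vᴴ := by
    have hst := hB.spectral_theorem
    rw [Unitary.conjStarAlgAut_apply, Matrix.star_eq_conjTranspose] at hst
    rw [hst]
    ext a b
    rw [entry_form, entry_form]
    exact (Fintype.sum_equiv σ _ _ (fun j => rfl)).symm
  have hW : Vᴴ * (Mᴴ * M) * V = diagonal (fun j => ((e j : ℝ) : 𝕜)) := by
    rw [hMM]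
    simp only [← Matrix.mul_assoc]
    rw [hVV, Matrix.one_mul, Matrix.mul_assoc, hVV, Matrix.mul_one]
  set N : Matrix (Fin n1) (Fin n2) 𝕜 := M * V with hNdef
  have hNN : Nᴴ * N = diagonal (fun j => ((e j : ℝ) : 𝕜)) := by
    rw [hNdef, conjTranspose_mul, ← Matrix.mul_assoc, Matrix.mul_assoc Vᴴ Mᴴ M]
    exact hW
  have hNNentry : ∀ a b : Fin n2,
      (∑ i, star (N i a) * N i b) = if a = b then ((e a : ℝ) : 𝕜) else 0 := by
    intro a b
    have := congrFun (congrFun hNN a) b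
    simp only [mul_apply, conjTranspose_apply] at this
    rw [this, diagonal_apply]
  have hNzero : ∀ j : Fin n2, e j = 0 → ∀ i, N i j = 0 := by
    intro j hj i
    have h1 := hNNentry j j
    simp only [if_pos rfl, hj] at h1
    have h2 : ∀ i, star (N i j) * N i j = ((‖N i j‖ ^ 2 : ℝ) : 𝕜) := fun i => by
      rw [RCLike.star_def, RCLike.conj_mul]; norm_cast
    rw [Finset.sum_congr rfl (fun i _ => h2 i)] at h1
    rw [← RCLike.ofReal_sum] at h1
    have h3 : (∑ i, ‖N i j‖ ^ 2) = 0 := by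
      refine RCLike.ofReal_injective (K := 𝕜) ?_
      rw [h1]; simp
    have h4 : ∀ i ∈ Finset.univ, (0:ℝ) ≤ ‖N i j‖ ^ 2 := fun i _ => sq_nonneg _
    have h5 := (Finset.sum_eq_zero_iff_of_nonneg h4).mp h3 i (Finset.mem_univ i)
    have : ‖N i j‖ = 0 := by
      have := sq_eq_zero_iff.mp h5
      exact this
    exact norm_eq_zero.mp this
  -- columns as Euclidean vectors
  set col : Fin n2 → EuclideanSpace 𝕜 (Fin n1) := fun j => WithLp.toLp 2 (fun i => N i j) with hcol
  have hinner : ∀ a b : Fin n2,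
      (inner 𝕜 (col a) (col b) : 𝕜) = if a = b then ((e a : ℝ) : 𝕜) else 0 := by
    intro a b
    rw [PiLp.inner_apply]
    simp only [RCLike.inner_apply]
    have : ∀ i, col b i * (starRingEnd 𝕜) (col a i) = star (N i a) * N i b := fun i => mul_comm _ _
    rw [Finset.sum_congr rfl (fun i _ => this i)]
    exact hNNentry a b
  -- positive singular values fit within n1
  have hcard : ∀ j : Fin n2, 0 < e j → (j : ℕ) < n1 := by
    intro j hj
    by_contra hle
    push_neg at hle
    have hjlt : ∀ t : Fin (n1 + 1), (t : ℕ) < n2 := fun t =>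
      lt_of_le_of_lt (le_trans (Nat.le_of_lt_succ t.isLt) hle) j.isLt
    set g : Fin (n1 + 1) → Fin n2 := fun t => ⟨t, hjlt t⟩ with hg
    have hgle : ∀ t, g t ≤ j := fun t => by
      simp only [hg, Fin.le_def]
      exact le_trans (Nat.le_of_lt_succ t.isLt) hle
    have hpos : ∀ t, 0 < e (g t) := fun t => lt_of_lt_of_le hj (hanti (g t) j (hgle t))
    set f : Fin (n1 + 1) → EuclideanSpace 𝕜 (Fin n1) :=
      fun t => (((Real.sqrt (e (g t)))⁻¹ : ℝ) : 𝕜) • col (g t) with hf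
    have horth : Orthonormal 𝕜 f := by
      rw [orthonormal_iff_ite]
      intro t t'
      simp only [hf]
      rw [inner_smul_left, inner_smul_right, hinner, RCLike.conj_ofReal]
      by_cases h : t = t'
      · subst h
        rw [if_pos rfl, if_pos rfl]
        have hs : 0 < Real.sqrt (e (g t)) := Real.sqrt_pos.mpr (hpos t)
        rw [← RCLike.ofReal_mul, ← RCLike.ofReal_mul, ← RCLike.ofReal_one]
        congr 1
        rw [← Real.mul_self_sqrt (he0 (g t))]
        field_simp
        rw [Real.sqrt_sq (Real.sqrt_nonneg _)]
      · have hgg : g t ≠ g t' := fun hc => h (by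
          apply Fin.ext
          have := congrArg Fin.val hc
          simpa [hg] using this)
        rw [if_neg hgg, if_neg h, mul_zero, mul_zero]
    have hli := horth.linearIndependent
    have hcle := hli.fintype_card_le_finrank
    rw [finrank_euclideanSpace_fin] at hcle
    simp only [Fintype.card_fin] at hcle
    omega
  -- construct U
  set P : Set (Fin n1) := {i | ∃ h : (i : ℕ) < n2, 0 < e ⟨(i : ℕ), h⟩} with hPdef
  set v : Fin n1 → EuclideanSpace 𝕜 (Fin n1) := fun i =>
    if h : (i : ℕ) < n2 then
      (((Real.sqrt (e ⟨(i : ℕ), h⟩))⁻¹ : ℝ) : 𝕜) • col ⟨(i : ℕ), h⟩ else 0 with hv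
  have hvP : Orthonormal 𝕜 (P.restrict v) := by
    rw [orthonormal_iff_ite]
    rintro ⟨i, hi⟩ ⟨i', hi'⟩
    obtain ⟨h1, h2⟩ := hi
    obtain ⟨h1', h2'⟩ := hi'
    simp only [Set.restrict_apply, Set.restrict, hv, dif_pos h1, dif_pos h1']
    rw [inner_smul_left, inner_smul_right, hinner, RCLike.conj_ofReal]
    by_cases h : i = i'
    · subst h
      rw [if_pos rfl, if_pos (by rw [Subtype.mk.injEq])]
      have hs : 0 < Real.sqrt (e ⟨(i : ℕ), h1⟩) := Real.sqrt_pos.mpr h2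
      rw [← RCLike.ofReal_mul, ← RCLike.ofReal_mul, ← RCLike.ofReal_one]
      congr 1
      rw [← Real.mul_self_sqrt (he0 ⟨(i : ℕ), h1⟩)]
      field_simp
      rw [Real.sqrt_sq (Real.sqrt_nonneg _)]
    · have hne : (⟨(i : ℕ), h1⟩ : Fin n2) ≠ ⟨(i' : ℕ), h1'⟩ := fun hc =>
        h (Fin.ext (by simpa using congrArg Fin.val hc))
      rw [if_neg hne, if_neg (by simp [Subtype.mk.injEq, h]), mul_zero, mul_zero]
  have hfr : Module.finrank 𝕜 (EuclideanSpace 𝕜 (Fin n1)) = Fintype.card (Fin n1) := by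
    rw [finrank_euclideanSpace_fin, Fintype.card_fin]
  obtain ⟨b, hb⟩ := hvP.exists_orthonormalBasis_extension_of_card_eq hfr
  set U : Matrix (Fin n1) (Fin n1) 𝕜 := Matrix.of (fun a i => b i a) with hU
  have hUU : Uᴴ * U = 1 := by
    ext i i'
    have hbo := (orthonormal_iff_ite.mp b.orthonormal) i i'
    rw [PiLp.inner_apply] at hbo
    simp only [RCLike.inner_apply] at hbo
    rw [mul_apply, one_apply]
    simp only [conjTranspose_apply, hU, Matrix.of_apply, Matrix.star_apply]
    rw [← hbo]
    exact Finset.sum_congr rfl fun _ _ => mul_comm _ _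
  have hUU' : U * Uᴴ = 1 := mul_eq_one_comm.mp hUU
  set S : Fin n1 → Fin n2 → ℝ := fun i j =>
    if (i : ℕ) = (j : ℕ) then Real.sqrt (e j) else 0 with hS
  have key : N = U * Matrix.of (fun i j => ((S i j : ℝ) : 𝕜)) := by
    ext i j
    rw [mul_apply]
    rcases (he0 j).lt_or_eq with hpos | hzero
    · have hjn1 : (j : ℕ) < n1 := hcard j hpos
      have hsum : ∀ a : Fin n1, a ∈ Finset.univ → a ≠ ⟨(j : ℕ), hjn1⟩ →
          U i a * ((S a j : ℝ) : 𝕜) = 0 := by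
        intro a _ ha
        have : (a : ℕ) ≠ (j : ℕ) := fun hc => ha (Fin.ext hc)
        simp [hS, this]
      rw [Finset.sum_eq_single_of_mem ⟨(j : ℕ), hjn1⟩ (Finset.mem_univ _) hsum]
      have haP : (⟨(j : ℕ), hjn1⟩ : Fin n1) ∈ P := by
        refine ⟨j.isLt, ?_⟩
        simpa using hpos
      have hba := hb _ haP
      simp only [hU, Matrix.of_apply, hS, if_pos rfl]
      rw [hba]
      simp only [hv, dif_pos j.isLt]
      have hcolval : (((((Real.sqrt (e ⟨((⟨(j : ℕ), hjn1⟩ : Fin n1) : ℕ), j.isLt⟩))⁻¹ : ℝ) : 𝕜) •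
          col ⟨((⟨(j : ℕ), hjn1⟩ : Fin n1) : ℕ), j.isLt⟩) i)
          = (((Real.sqrt (e j))⁻¹ : ℝ) : 𝕜) * N i j := by
        have hjj : (⟨((⟨(j : ℕ), hjn1⟩ : Fin n1) : ℕ), j.isLt⟩ : Fin n2) = j := Fin.ext rfl
        rw [hjj, PiLp.smul_apply]
        rfl
      rw [hcolval]
      have hs : Real.sqrt (e j) ≠ 0 := (Real.sqrt_pos.mpr hpos).ne'
      have hs' : ((Real.sqrt (e j) : ℝ) : 𝕜) ≠ 0 := RCLike.ofReal_ne_zero.mpr hs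
      push_cast
      field_simp
    · rw [hNzero j hzero.symm i]
      symm
      refine Finset.sum_eq_zero fun a _ => ?_
      have : Real.sqrt (e j) = 0 := by rw [← hzero, Real.sqrt_zero]
      simp [hS, this]
  refine ⟨U, S, V, hUU, hUU', hVV, hVV', ?_, ?_, ?_, ?_⟩
  · intro i j hij
    simp [hS, hij]
  · intro i j
    simp only [hS]
    split
    · exact Real.sqrt_nonneg _
    · exact le_rfl
  · intro i i' j j' hij hij' hii'
    simp only [hS, if_pos hij, if_pos hij']
    refine Real.sqrt_le_sqrt (hanti j j' ?_)
    rw [Fin.le_def]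
    omega
  · calc M = M * (V * Vᴴ) := by rw [hVV', Matrix.mul_one]
      _ = N * Vᴴ := by rw [← Matrix.mul_assoc, ← hNdef]
      _ = _ := by rw [key]

end SVD

section Fourier

open Finset

variable {n3 : ℕ}

/-- The base root of unity used by `dftMatrix`. -/
noncomputable def zeta (n : ℕ) : ℂ :=
  Complex.exp (-(2 * (Real.pi : ℂ) * Complex.I) / (n : ℂ))

lemma zeta_ne_zero (n : ℕ) : zeta n ≠ 0 := Complex.exp_ne_zero _

lemma zeta_pow_n (hn : 0 < n3) : zeta n3 ^ n3 = 1 := by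
  rw [zeta, ← Complex.exp_nat_mul]
  have hne : (n3 : ℂ) ≠ 0 := Nat.cast_ne_zero.mpr hn.ne'
  rw [mul_div_cancel₀ _ hne]
  rw [Complex.exp_neg, Complex.exp_two_pi_mul_I, inv_one]

lemma conj_zeta (hn : 0 < n3) : (starRingEnd ℂ) (zeta n3) = (zeta n3)⁻¹ := by
  rw [zeta, ← Complex.exp_conj, ← Complex.exp_neg]
  congr 1
  rw [map_div₀]
  simp only [map_neg, map_mul, Complex.conj_I, Complex.conj_ofReal, map_ofNat, map_natCast]
  ring

lemma zeta_pow_dvd (hn : 0 < n3) {s : ℕ} (hs : n3 ∣ s) : zeta n3 ^ s = 1 := by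
  obtain ⟨c, rfl⟩ := hs
  rw [pow_mul, zeta_pow_n hn, one_pow]

lemma pow_mod_eq {x : ℂ} (hx : x ^ n3 = 1) (c : ℕ) : x ^ (c % n3) = x ^ c := by
  conv_rhs => rw [← Nat.div_add_mod c n3, pow_add, pow_mul, hx, one_pow, one_mul]

/-- `x^((a+b : Fin n3).val) = x^a.val * x^b.val` for `x` an `n3`-th root of unity. -/
lemma pow_val_add {x : ℂ} (hx : x ^ n3 = 1) (a b : Fin n3) :
    x ^ ((a + b : Fin n3) : ℕ) = x ^ (a : ℕ) * x ^ (b : ℕ) := by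
  rw [Fin.val_add, pow_mod_eq hx, pow_add]

lemma pow_val_neg_mul {x : ℂ} (hx : x ^ n3 = 1) [NeZero n3] (b : Fin n3) :
    x ^ ((-b : Fin n3) : ℕ) * x ^ (b : ℕ) = 1 := by
  rw [← pow_add]
  have h : (((-b : Fin n3) : ℕ) + (b : ℕ)) % n3 = 0 := by
    have := Fin.val_add (-b) b
    rw [neg_add_cancel] at this
    simpa using this.symm
  obtain ⟨c, hc⟩ := Nat.dvd_of_mod_eq_zero h
  rw [hc, pow_mul, hx, one_pow]

lemma isPrimitiveRoot_zeta (hn : 0 < n3) : IsPrimitiveRoot (zeta n3) n3 := by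
  have h := Complex.isPrimitiveRoot_exp n3 hn.ne'
  have h2 : zeta n3 = (Complex.exp (2 * Real.pi * Complex.I / n3))⁻¹ := by
    rw [zeta, ← Complex.exp_neg]
    congr 1
    ring
  rw [h2]
  exact h.inv

/-- Orthogonality of DFT characters. -/
lemma dft_orth_s4 (hn : 0 < n3) (a b : Fin n3) :
    ∑ m : Fin n3, zeta n3 ^ ((a : ℕ) * (m : ℕ)) *
      (starRingEnd ℂ) (zeta n3 ^ ((b : ℕ) * (m : ℕ))) =
    (if a = b then (n3 : ℂ) else 0) := by
  haveI : NeZero n3 := ⟨hn.ne'⟩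
  set x : ℂ := zeta n3 ^ (a : ℕ) * (starRingEnd ℂ) (zeta n3 ^ (b : ℕ)) with hxdef
  have hterm : ∀ m : Fin n3, zeta n3 ^ ((a : ℕ) * (m : ℕ)) *
      (starRingEnd ℂ) (zeta n3 ^ ((b : ℕ) * (m : ℕ))) = x ^ (m : ℕ) := by
    intro m
    rw [pow_mul, pow_mul, map_pow, hxdef, mul_pow]
  rw [Finset.sum_congr rfl (fun m _ => hterm m)]
  rw [Fin.sum_univ_eq_sum_range (fun c => x ^ c)]
  have hxn : x ^ n3 = 1 := by
    rw [hxdef, mul_pow, ← pow_mul, mul_comm (a : ℕ), pow_mul, zeta_pow_n hn, one_pow,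
      ← map_pow, ← pow_mul, mul_comm (b : ℕ), pow_mul, zeta_pow_n hn, one_pow, map_one, mul_one]
  have hx1 : x = 1 ↔ a = b := by
    rw [hxdef, map_pow, conj_zeta hn, inv_pow,
      mul_inv_eq_one₀ (pow_ne_zero _ (zeta_ne_zero n3))]
    constructor
    · intro h
      exact Fin.ext ((isPrimitiveRoot_zeta hn).pow_inj a.isLt b.isLt h)
    · rintro rfl; rfl
  by_cases hab : a = b
  · rw [if_pos hab]
    have : x = 1 := hx1.mpr hab
    rw [this]
    simp
  · rw [if_neg hab]
    have hxne : x ≠ 1 := fun hc => hab (hx1.mp hc)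
    rw [geom_sum_eq hxne, hxn]
    simp

end Fourier


section HatLemmas

open Finset Matrix

variable {n1 n2 n3 l p q : ℕ}

lemma T3tprod_apply (A : T3 n1 n2 n3 ℝ) (B : T3 n2 l n3 ℝ) (i : Fin n1) (j : Fin l)
    (k : Fin n3) : tprod A B i j k = ∑ q' : Fin n3, ∑ p' : Fin n2, A i p' (k - q') * B p' j q' :=
  rfl

lemma hatSlice_apply (A : T3 n1 n2 n3 ℝ) (k : Fin n3) (i : Fin n1) (j : Fin n2) :
    hatSlice A k i j = ∑ m : Fin n3, dftMatrix n3 k m * ((A i j m : ℝ) : ℂ) := rfl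

lemma tT_apply (A : T3 n1 n2 n3 ℝ) (j : Fin n2) (i : Fin n1) (k : Fin n3) :
    tT A j i k = A i j (-k) := rfl

lemma dftMatrix_eq (n : ℕ) (k m : Fin n) :
    dftMatrix n k m = zeta n ^ ((k : ℕ) * (m : ℕ)) := rfl

lemma zeta_pow_k (hn : 0 < n3) (k : Fin n3) : (zeta n3 ^ (k : ℕ)) ^ n3 = 1 := by
  rw [← pow_mul, mul_comm, pow_mul, zeta_pow_n hn, one_pow]

lemma zeta_pow_neg (hn : 0 < n3) (k m : Fin n3) :
    haveI : NeZero n3 := ⟨hn.ne'⟩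
    zeta n3 ^ ((k : ℕ) * ((-m : Fin n3) : ℕ)) =
      (starRingEnd ℂ) (zeta n3 ^ ((k : ℕ) * (m : ℕ))) := by
  haveI : NeZero n3 := ⟨hn.ne'⟩
  have hne : zeta n3 ^ ((k : ℕ) * (m : ℕ)) ≠ 0 := pow_ne_zero _ (zeta_ne_zero n3)
  apply mul_right_cancel₀ hne
  have hR : (starRingEnd ℂ) (zeta n3 ^ ((k : ℕ) * (m : ℕ))) *
      zeta n3 ^ ((k : ℕ) * (m : ℕ)) = 1 := by
    rw [map_pow, conj_zeta hn, inv_pow, inv_mul_cancel₀ hne]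
  rw [hR, pow_mul, pow_mul, pow_val_neg_mul (zeta_pow_k hn k) m]

lemma zeta_pow_neg' (hn : 0 < n3) (k m : Fin n3) :
    haveI : NeZero n3 := ⟨hn.ne'⟩
    zeta n3 ^ (((-k : Fin n3) : ℕ) * (m : ℕ)) =
      (starRingEnd ℂ) (zeta n3 ^ ((k : ℕ) * (m : ℕ))) := by
  haveI : NeZero n3 := ⟨hn.ne'⟩
  rw [mul_comm (((-k : Fin n3)) : ℕ) (m : ℕ), zeta_pow_neg hn m k, mul_comm ((k : ℕ)) ((m : ℕ))]

lemma hat_tprod (hn : 0 < n3) (A : T3 n1 n2 n3 ℝ) (B : T3 n2 l n3 ℝ) (k : Fin n3) :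
    hatSlice (tprod A B) k = hatSlice A k * hatSlice B k := by
  haveI : NeZero n3 := ⟨hn.ne'⟩
  ext i j
  rw [Matrix.mul_apply]
  simp only [hatSlice_apply, T3tprod_apply, dftMatrix_eq]
  push_cast
  calc (∑ m : Fin n3, zeta n3 ^ ((k:ℕ)*(m:ℕ)) *
          ∑ q' : Fin n3, ∑ p' : Fin n2, (A i p' (m - q') : ℂ) * (B p' j q' : ℂ))
      = ∑ q' : Fin n3, ∑ m : Fin n3, ∑ p' : Fin n2,
          zeta n3 ^ ((k:ℕ)*(m:ℕ)) * ((A i p' (m - q') : ℂ) * (B p' j q' : ℂ)) := by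
        refine Eq.trans (Finset.sum_congr rfl fun m _ => ?_) (Finset.sum_comm)
        rw [Finset.mul_sum]
        exact Finset.sum_congr rfl fun q' _ => Finset.mul_sum _ _ _
    _ = ∑ q' : Fin n3, ∑ m : Fin n3, ∑ p' : Fin n2,
          (zeta n3 ^ ((k:ℕ)*(m:ℕ)) * (A i p' m : ℂ)) *
          (zeta n3 ^ ((k:ℕ)*((q':Fin n3):ℕ)) * (B p' j q' : ℂ)) := by
        refine Finset.sum_congr rfl fun q' _ => ?_
        rw [← Equiv.sum_comp (Equiv.addRight q')
          (fun m => ∑ p' : Fin n2,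
            zeta n3 ^ ((k:ℕ)*(m:ℕ)) * ((A i p' (m - q') : ℂ) * (B p' j q' : ℂ)))]
        refine Finset.sum_congr rfl fun m _ => Finset.sum_congr rfl fun p' _ => ?_
        have h1 : (m + q') - q' = m := add_sub_cancel_right m q'
        have h2 : zeta n3 ^ ((k:ℕ)*(((m + q' : Fin n3)):ℕ)) =
            zeta n3 ^ ((k:ℕ)*(m:ℕ)) * zeta n3 ^ ((k:ℕ)*((q':Fin n3):ℕ)) := by
          rw [pow_mul, pow_val_add (zeta_pow_k hn k) m q', ← pow_mul, ← pow_mul]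
        simp only [Equiv.coe_addRight, h1, h2]
        ring
    _ = ∑ p' : Fin n2, (∑ m : Fin n3, zeta n3 ^ ((k:ℕ)*(m:ℕ)) * (A i p' m : ℂ)) *
          (∑ q' : Fin n3, zeta n3 ^ ((k:ℕ)*((q':Fin n3):ℕ)) * (B p' j q' : ℂ)) := by
        refine Eq.trans (Finset.sum_comm) ?_
        refine Eq.trans (Finset.sum_congr rfl fun m _ => Finset.sum_comm) ?_
        refine Eq.trans (Finset.sum_comm) ?_
        refine Finset.sum_congr rfl fun p' _ => ?_
        rw [Finset.sum_mul_sum]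

lemma hat_tT (hn : 0 < n3) (A : T3 n1 n2 n3 ℝ) (k : Fin n3) :
    hatSlice (tT A) k = (hatSlice A k)ᴴ := by
  haveI : NeZero n3 := ⟨hn.ne'⟩
  ext j i
  rw [Matrix.conjTranspose_apply]
  simp only [hatSlice_apply, tT_apply, dftMatrix_eq, RCLike.star_def, map_sum]
  calc (∑ m : Fin n3, zeta n3 ^ ((k:ℕ)*(m:ℕ)) * ((A i j (-m) : ℝ) : ℂ))
      = ∑ m : Fin n3, zeta n3 ^ ((k:ℕ)*(((-m : Fin n3)):ℕ)) * ((A i j (-(-m)) : ℝ) : ℂ) := by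
        exact (Equiv.sum_comp (Equiv.neg (Fin n3))
          (fun m => zeta n3 ^ ((k:ℕ)*(m:ℕ)) * ((A i j (-m) : ℝ) : ℂ))).symm
    _ = ∑ m : Fin n3, (starRingEnd ℂ) (zeta n3 ^ ((k:ℕ)*(m:ℕ))) * ((A i j m : ℝ) : ℂ) := by
        refine Finset.sum_congr rfl fun m _ => ?_
        rw [neg_neg, zeta_pow_neg hn]
    _ = ∑ m : Fin n3, (starRingEnd ℂ) (zeta n3 ^ ((k:ℕ)*(m:ℕ)) * ((A i j m : ℝ) : ℂ)) := by
        refine Finset.sum_congr rfl fun m _ => ?_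
        rw [RingHom.map_mul, Complex.conj_ofReal]

lemma hat_tI (hn : 0 < n3) (n : ℕ) (k : Fin n3) :
    hatSlice (tI n n3) k = (1 : Matrix (Fin n) (Fin n) ℂ) := by
  haveI : NeZero n3 := ⟨hn.ne'⟩
  ext i j
  simp only [hatSlice_apply, tI, dftMatrix_eq, Matrix.one_apply]
  by_cases h : i = j
  · subst h
    rw [Finset.sum_eq_single (0 : Fin n3)]
    · simp
    · intro m _ hm
      have hm0 : ¬(i = i ∧ (m : ℕ) = 0) := by
        rintro ⟨-, h0⟩
        exact hm (Fin.ext (by simpa using h0))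
      rw [if_neg hm0]
      simp
    · intro h'
      exact absurd (Finset.mem_univ _) h'
  · simp [h]

lemma hat_inv_sum (hn : 0 < n3) (A : T3 n1 n2 n3 ℝ) (i : Fin n1) (j : Fin n2) (m : Fin n3) :
    ∑ k : Fin n3, (starRingEnd ℂ) (dftMatrix n3 k m) * hatSlice A k i j
      = (n3 : ℂ) * ((A i j m : ℝ) : ℂ) := by
  simp only [hatSlice_apply, dftMatrix_eq]
  calc (∑ k : Fin n3, (starRingEnd ℂ) (zeta n3 ^ ((k:ℕ)*(m:ℕ))) *
          ∑ m' : Fin n3, zeta n3 ^ ((k:ℕ)*((m':Fin n3):ℕ)) * ((A i j m' : ℝ) : ℂ))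
      = ∑ m' : Fin n3, (∑ k : Fin n3, zeta n3 ^ (((m':Fin n3):ℕ)*(k:ℕ)) *
          (starRingEnd ℂ) (zeta n3 ^ ((m:ℕ)*(k:ℕ)))) * ((A i j m' : ℝ) : ℂ) := by
        refine Eq.trans (Finset.sum_congr rfl fun k _ => Finset.mul_sum _ _ _) ?_
        refine Eq.trans (Finset.sum_comm) ?_
        refine Finset.sum_congr rfl fun m' _ => ?_
        rw [Finset.sum_mul]
        refine Finset.sum_congr rfl fun k _ => ?_
        rw [mul_comm ((k:ℕ)) (((m':Fin n3)):ℕ), mul_comm ((k:ℕ)) ((m:ℕ))]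
        ring
    _ = ∑ m' : Fin n3, (if m' = m then (n3 : ℂ) else 0) * ((A i j m' : ℝ) : ℂ) :=
        Finset.sum_congr rfl fun m' _ => by rw [dft_orth_s4 hn m' m]
    _ = (n3 : ℂ) * ((A i j m : ℝ) : ℂ) := by
        rw [Finset.sum_eq_single m]
        · rw [if_pos rfl]
        · intro m'' _ hm
          rw [if_neg hm, zero_mul]
        · intro h'
          exact absurd (Finset.mem_univ _) h'

lemma hat_inj (hn : 0 < n3) {A B : T3 n1 n2 n3 ℝ}
    (h : ∀ k : Fin n3, hatSlice A k = hatSlice B k) : A = B := by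
  funext i j m
  have h0 : (∑ k : Fin n3, (starRingEnd ℂ) (dftMatrix n3 k m) * hatSlice A k i j)
      = ∑ k : Fin n3, (starRingEnd ℂ) (dftMatrix n3 k m) * hatSlice B k i j :=
    Finset.sum_congr rfl fun k _ => by rw [h k]
  have h3 := ((hat_inv_sum hn A i j m).symm.trans h0).trans (hat_inv_sum hn B i j m)
  have hne : (n3 : ℂ) ≠ 0 := Nat.cast_ne_zero.mpr hn.ne'
  have := mul_left_cancel₀ hne h3
  exact_mod_cast this

/-- Inverse DFT of a family of matrix slices, taking real parts. -/
noncomputable def invDFT (n3 : ℕ) (G : Fin n3 → Matrix (Fin p) (Fin q) ℂ) : T3 p q n3 ℝ :=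
  fun i j m => (((n3 : ℂ))⁻¹ * ∑ k, (starRingEnd ℂ) (dftMatrix n3 k m) * G k i j).re

lemma hat_invDFT (hn : 0 < n3) (G : Fin n3 → Matrix (Fin p) (Fin q) ℂ)
    (hsym : ∀ (k : Fin n3) (i : Fin p) (j : Fin q),
      haveI : NeZero n3 := ⟨hn.ne'⟩
      G (-k) i j = (starRingEnd ℂ) (G k i j)) (k : Fin n3) :
    hatSlice (invDFT n3 G) k = G k := by
  haveI : NeZero n3 := ⟨hn.ne'⟩
  ext i j
  have hreal : ∀ m : Fin n3,
      ((((n3 : ℂ))⁻¹ * ∑ k', (starRingEnd ℂ) (dftMatrix n3 k' m) * G k' i j).re : ℂ)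
        = ((n3 : ℂ))⁻¹ * ∑ k', (starRingEnd ℂ) (dftMatrix n3 k' m) * G k' i j := by
    intro m
    rw [← Complex.conj_eq_iff_re]
    rw [RingHom.map_mul, map_sum]
    have hn3 : (starRingEnd ℂ) (((n3 : ℂ))⁻¹) = ((n3 : ℂ))⁻¹ := by
      rw [map_inv₀, map_natCast]
    rw [hn3]
    congr 1
    calc (∑ k' : Fin n3, (starRingEnd ℂ) ((starRingEnd ℂ) (dftMatrix n3 k' m) * G k' i j))
        = ∑ k' : Fin n3, dftMatrix n3 k' m * (starRingEnd ℂ) (G k' i j) := by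
          refine Finset.sum_congr rfl fun k' _ => ?_
          rw [RingHom.map_mul, Complex.conj_conj]
      _ = ∑ k' : Fin n3, dftMatrix n3 k' m * G (-k') i j := by
          refine Finset.sum_congr rfl fun k' _ => by rw [hsym]
      _ = ∑ k' : Fin n3, dftMatrix n3 (-(-k')) m * G (-k') i j := by
          simp only [neg_neg]
      _ = ∑ k' : Fin n3, dftMatrix n3 (-k') m * G k' i j := by
          exact Equiv.sum_comp (Equiv.neg (Fin n3)) (fun k' => dftMatrix n3 (-k') m * G k' i j)
      _ = ∑ k' : Fin n3, (starRingEnd ℂ) (dftMatrix n3 k' m) * G k' i j := by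
          refine Finset.sum_congr rfl fun k' _ => ?_
          rw [dftMatrix_eq, dftMatrix_eq, zeta_pow_neg' hn]
  simp only [hatSlice, invDFT]
  calc (∑ m : Fin n3, dftMatrix n3 k m *
          ((((n3 : ℂ))⁻¹ * ∑ k', (starRingEnd ℂ) (dftMatrix n3 k' m) * G k' i j).re : ℂ))
      = ∑ m : Fin n3, ∑ k' : Fin n3,
          ((n3 : ℂ))⁻¹ * (dftMatrix n3 k m * (starRingEnd ℂ) (dftMatrix n3 k' m)) * G k' i j := by
        refine Finset.sum_congr rfl fun m _ => ?_
        rw [hreal m, Finset.mul_sum, Finset.mul_sum]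
        refine Finset.sum_congr rfl fun k' _ => by ring
    _ = ∑ k' : Fin n3, ((n3 : ℂ))⁻¹ *
          (∑ m : Fin n3, dftMatrix n3 k m * (starRingEnd ℂ) (dftMatrix n3 k' m)) * G k' i j := by
        refine Eq.trans Finset.sum_comm ?_
        refine Finset.sum_congr rfl fun k' _ => ?_
        rw [Finset.mul_sum, Finset.sum_mul]
    _ = ∑ k' : Fin n3, ((n3 : ℂ))⁻¹ * (if k = k' then (n3 : ℂ) else 0) * G k' i j := by
        refine Finset.sum_congr rfl fun k' _ => ?_
        have horth : (∑ m : Fin n3, dftMatrix n3 k m * (starRingEnd ℂ) (dftMatrix n3 k' m))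
            = if k = k' then (n3 : ℂ) else 0 := by
          simpa only [dftMatrix_eq] using dft_orth_s4 hn k k'
        rw [horth]
    _ = G k i j := by
        rw [Finset.sum_eq_single k]
        · rw [if_pos rfl]
          have hne : (n3 : ℂ) ≠ 0 := Nat.cast_ne_zero.mpr hn.ne'
          rw [inv_mul_cancel₀ hne, one_mul]
        · intro k'' _ hk
          rw [if_neg (fun hc => hk hc.symm)]
          ring
        · intro h'
          exact absurd (Finset.mem_univ _) h'

end HatLemmas


section SymSVD

open Matrix

variable {n1 n2 n3 : ℕ}

/-- Data of an SVD: `(U, s, V)`. -/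
abbrev SVDdat (n1 n2 : ℕ) : Type :=
  Matrix (Fin n1) (Fin n1) ℂ × (Fin n1 → Fin n2 → ℝ) × Matrix (Fin n2) (Fin n2) ℂ

/-- `d` is an ordered SVD of `M`. -/
def SVDProps (M : Matrix (Fin n1) (Fin n2) ℂ) (d : SVDdat n1 n2) : Prop :=
  d.1ᴴ * d.1 = 1 ∧ d.1 * d.1ᴴ = 1 ∧ d.2.2ᴴ * d.2.2 = 1 ∧ d.2.2 * d.2.2ᴴ = 1 ∧
  (∀ (i : Fin n1) (j : Fin n2), (i : ℕ) ≠ (j : ℕ) → d.2.1 i j = 0) ∧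
  (∀ (i : Fin n1) (j : Fin n2), 0 ≤ d.2.1 i j) ∧
  (∀ (i i' : Fin n1) (j j' : Fin n2), (i : ℕ) = (j : ℕ) → (i' : ℕ) = (j' : ℕ) →
    (i : ℕ) ≤ (i' : ℕ) → d.2.1 i' j' ≤ d.2.1 i j) ∧
  M = d.1 * (Matrix.of fun i j => ((d.2.1 i j : ℝ) : ℂ)) * d.2.2ᴴ

/-- Entrywise conjugation of the SVD data. -/
def conjD (d : SVDdat n1 n2) : SVDdat n1 n2 :=
  (d.1.map (starRingEnd ℂ), d.2.1, d.2.2.map (starRingEnd ℂ))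

lemma map_conj_conjTranspose {p q : ℕ} (X : Matrix (Fin p) (Fin q) ℂ) :
    (X.map (starRingEnd ℂ))ᴴ = Xᴴ.map (starRingEnd ℂ) := by
  ext i j
  simp [conjTranspose_apply, map_apply]

lemma map_conj_map_conj {p q : ℕ} (X : Matrix (Fin p) (Fin q) ℂ) :
    (X.map (starRingEnd ℂ)).map (starRingEnd ℂ) = X := by
  ext i j
  simp [map_apply]

lemma conjD_conjD (d : SVDdat n1 n2) : conjD (conjD d) = d := by
  obtain ⟨U, s, V⟩ := d
  simp only [conjD]
  rw [map_conj_map_conj, map_conj_map_conj]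

lemma SVDProps_conj {M : Matrix (Fin n1) (Fin n2) ℂ} {d : SVDdat n1 n2}
    (h : SVDProps M d) : SVDProps (M.map (starRingEnd ℂ)) (conjD d) := by
  obtain ⟨h1, h2, h3, h4, h5, h6, h7, h8⟩ := h
  have hmul : ∀ {p q r : ℕ} (X : Matrix (Fin p) (Fin q) ℂ) (Y : Matrix (Fin q) (Fin r) ℂ),
      (X * Y).map (starRingEnd ℂ) = X.map (starRingEnd ℂ) * Y.map (starRingEnd ℂ) :=
    fun X Y => Matrix.map_mul
  have hone : ∀ {p : ℕ}, (1 : Matrix (Fin p) (Fin p) ℂ).map (starRingEnd ℂ) = 1 := by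
    intro p
    exact Matrix.map_one _ (map_zero _) (map_one _)
  refine ⟨?_, ?_, ?_, ?_, h5, h6, h7, ?_⟩
  · rw [conjD, map_conj_conjTranspose, ← hmul, h1, hone]
  · rw [conjD, map_conj_conjTranspose, ← hmul, h2, hone]
  · show (d.2.2.map (starRingEnd ℂ))ᴴ * d.2.2.map (starRingEnd ℂ) = 1
    rw [map_conj_conjTranspose, ← hmul, h3, hone]
  · show d.2.2.map (starRingEnd ℂ) * (d.2.2.map (starRingEnd ℂ))ᴴ = 1
    rw [map_conj_conjTranspose, ← hmul, h4, hone]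
  · show M.map (starRingEnd ℂ) = d.1.map (starRingEnd ℂ) *
      (Matrix.of fun i j => ((d.2.1 i j : ℝ) : ℂ)) * (d.2.2.map (starRingEnd ℂ))ᴴ
    have hS : (Matrix.of fun i j => ((d.2.1 i j : ℝ) : ℂ)).map (starRingEnd ℂ)
        = Matrix.of fun i j => ((d.2.1 i j : ℝ) : ℂ) := by
      ext i j
      simp [map_apply, Complex.conj_ofReal]
    rw [map_conj_conjTranspose, ← hS, ← hmul, ← hmul, ← h8]

/-- The real case: a matrix fixed by entrywise conjugation has an SVD fixed by `conjD`. -/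
lemma svd_exists_real {M : Matrix (Fin n1) (Fin n2) ℂ}
    (hr : M.map (starRingEnd ℂ) = M) : ∃ d : SVDdat n1 n2, SVDProps M d ∧ conjD d = d := by
  set R : Matrix (Fin n1) (Fin n2) ℝ := Matrix.of fun i j => (M i j).re with hR
  have hMR : M = R.map Complex.ofRealHom := by
    ext i j
    have := congrFun (congrFun hr i) j
    simp only [map_apply] at this
    have him : (M i j).im = 0 := by
      have := congrArg Complex.im this
      simp only [Complex.conj_im] at this
      linarith
    simp only [map_apply, hR, Matrix.of_apply, Complex.ofRealHom_eq_coe]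
    exact (Complex.ext (by simp) (by simp [him])).symm
  obtain ⟨Ur, s, Vr, h1, h2, h3, h4, h5, h6, h7, h8⟩ := svd_exists (𝕜 := ℝ) n1 n2 R
  set d : SVDdat n1 n2 := (Ur.map Complex.ofRealHom, s, Vr.map Complex.ofRealHom) with hd
  have hmapCT : ∀ {p q : ℕ} (X : Matrix (Fin p) (Fin q) ℝ),
      (X.map Complex.ofRealHom)ᴴ = Xᴴ.map Complex.ofRealHom := by
    intro p q X
    ext i j
    simp [conjTranspose_apply, map_apply, Complex.conj_ofReal]
  have hmul : ∀ {p q r : ℕ} (X : Matrix (Fin p) (Fin q) ℝ) (Y : Matrix (Fin q) (Fin r) ℝ),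
      (X * Y).map Complex.ofRealHom = X.map Complex.ofRealHom * Y.map Complex.ofRealHom :=
    fun X Y => Matrix.map_mul
  have hone : ∀ {p : ℕ}, (1 : Matrix (Fin p) (Fin p) ℝ).map Complex.ofRealHom = 1 := by
    intro p
    exact Matrix.map_one _ (map_zero _) (map_one _)
  refine ⟨d, ⟨?_, ?_, ?_, ?_, h5, h6, h7, ?_⟩, ?_⟩
  · show (Ur.map Complex.ofRealHom)ᴴ * Ur.map Complex.ofRealHom = 1
    rw [hmapCT, ← hmul, h1, hone]
  · show Ur.map Complex.ofRealHom * (Ur.map Complex.ofRealHom)ᴴ = 1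
    rw [hmapCT, ← hmul, h2, hone]
  · show (Vr.map Complex.ofRealHom)ᴴ * Vr.map Complex.ofRealHom = 1
    rw [hmapCT, ← hmul, h3, hone]
  · show Vr.map Complex.ofRealHom * (Vr.map Complex.ofRealHom)ᴴ = 1
    rw [hmapCT, ← hmul, h4, hone]
  · show M = Ur.map Complex.ofRealHom * (Matrix.of fun i j => ((s i j : ℝ) : ℂ)) *
      (Vr.map Complex.ofRealHom)ᴴ
    have hSmap : (Matrix.of fun i j => (RCLike.ofReal (s i j) : ℝ)).map Complex.ofRealHom
        = Matrix.of fun i j => ((s i j : ℝ) : ℂ) := by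
      ext i j
      simp only [Matrix.map_apply, Matrix.of_apply, Complex.ofRealHom_eq_coe]
      norm_num
    rw [hmapCT, ← hSmap, ← hmul, ← hmul, hMR, h8]
  · show (((Ur.map Complex.ofRealHom).map (starRingEnd ℂ) : Matrix (Fin n1) (Fin n1) ℂ), s,
      (Vr.map Complex.ofRealHom).map (starRingEnd ℂ)) = d
    have hfix : ∀ {p q : ℕ} (X : Matrix (Fin p) (Fin q) ℝ),
        (X.map Complex.ofRealHom).map (starRingEnd ℂ) = X.map Complex.ofRealHom := by
      intro p q X
      ext i j
      simp [map_apply, Complex.conj_ofReal]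
    rw [hfix, hfix]

/-- Conjugation-compatible family of SVDs of the slices `Mf k`. -/
lemma svd_family (hn : 0 < n3) (Mf : Fin n3 → Matrix (Fin n1) (Fin n2) ℂ)
    (hsym : haveI : NeZero n3 := ⟨hn.ne'⟩
      ∀ k : Fin n3, Mf (-k) = (Mf k).map (starRingEnd ℂ)) :
    haveI : NeZero n3 := ⟨hn.ne'⟩
    ∃ D : Fin n3 → SVDdat n1 n2,
      (∀ k, SVDProps (Mf k) (D k)) ∧ (∀ k, D (-k) = conjD (D k)) := by
  haveI : NeZero n3 := ⟨hn.ne'⟩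
  classical
  have hA : ∀ M : Matrix (Fin n1) (Fin n2) ℂ,
      ∃ d, SVDProps M d ∧ (M.map (starRingEnd ℂ) = M → conjD d = d) := by
    intro M
    by_cases h : M.map (starRingEnd ℂ) = M
    · obtain ⟨d, hd1, hd2⟩ := svd_exists_real h
      exact ⟨d, hd1, fun _ => hd2⟩
    · obtain ⟨U, s, V, h1, h2, h3, h4, h5, h6, h7, h8⟩ := svd_exists (𝕜 := ℂ) n1 n2 M
      exact ⟨(U, s, V), ⟨h1, h2, h3, h4, h5, h6, h7, h8⟩, fun hc => absurd hc h⟩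
  choose F hF1 hF2 using hA
  set D : Fin n3 → SVDdat n1 n2 := fun k =>
    if (k : ℕ) < ((-k : Fin n3) : ℕ) then F (Mf k)
    else if ((-k : Fin n3) : ℕ) < (k : ℕ) then conjD (F (Mf (-k)))
    else F (Mf k) with hD
  have hself : ∀ k : Fin n3, ¬((k : ℕ) < ((-k : Fin n3) : ℕ)) →
      ¬(((-k : Fin n3) : ℕ) < (k : ℕ)) → -k = k := by
    intro k hlt hgt
    exact Fin.ext (by omega)
  refine ⟨D, ?_, ?_⟩
  · intro k
    rw [hD]
    dsimp only
    split_ifs with hc1 hc2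
    · exact hF1 (Mf k)
    · have := SVDProps_conj (hF1 (Mf (-k)))
      rwa [← hsym (-k), neg_neg] at this
    · exact hF1 (Mf k)
  · intro k
    rcases lt_trichotomy ((k : ℕ)) (((-k : Fin n3)) : ℕ) with hc | hc | hc
    · -- k < -k : D k = F (Mf k), D (-k) = conjD (F (Mf k))
      have h1 : D k = F (Mf k) := by rw [hD]; dsimp only; rw [if_pos hc]
      have h2 : D (-k) = conjD (F (Mf k)) := by
        rw [hD]
        dsimp only
        rw [neg_neg, if_neg (by omega), if_pos hc]
      rw [h1, h2]
    · -- k = -k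
      have hkk : -k = k := Fin.ext hc.symm
      have h1 : D k = F (Mf k) := by
        rw [hD]
        dsimp only
        rw [if_neg (by omega), if_neg (by omega)]
      have hfix : conjD (F (Mf k)) = F (Mf k) := by
        apply hF2
        rw [← hsym k, hkk]
      rw [hkk, h1, hfix]
    · -- -k < k : D k = conjD (F (Mf (-k))), D (-k) = F (Mf (-k))
      have h1 : D k = conjD (F (Mf (-k))) := by
        rw [hD]
        dsimp only
        rw [if_neg (by omega), if_pos hc]
      have h2 : D (-k) = F (Mf (-k)) := by
        rw [hD]
        dsimp only
        rw [neg_neg, if_pos hc]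
      rw [h1, h2, conjD_conjD]

end SymSVD


/-- t-SVD existence: every `A ∈ ℝ^{n1×n2×n3}` has an ordered t-SVD
`A = U * S * Vᵀ` with `U, V` orthogonal and `S` f-diagonal. -/
theorem stmt_4 (n1 n2 n3 : ℕ) (A : T3 n1 n2 n3 ℝ) :
    ∃ (U : T3 n1 n1 n3 ℝ) (S : T3 n1 n2 n3 ℝ) (V : T3 n2 n2 n3 ℝ),
      IsOrderedTSVD A U S V := by
  rcases Nat.eq_zero_or_pos n3 with hn0 | hn
  · subst hn0
    refine ⟨fun _ _ k => k.elim0, fun _ _ k => k.elim0, fun _ _ k => k.elim0,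
      ⟨⟨⟨?_, ?_⟩, ⟨?_, ?_⟩, ?_, ?_⟩, ?_⟩⟩
    · funext i j k; exact k.elim0
    · funext i j k; exact k.elim0
    · funext i j k; exact k.elim0
    · funext i j k; exact k.elim0
    · intro i j k _; exact k.elim0
    · funext i j k; exact k.elim0
    · intro k; exact k.elim0
  · haveI : NeZero n3 := ⟨hn.ne'⟩
    have hAsym : ∀ k : Fin n3, hatSlice A (-k) = (hatSlice A k).map (starRingEnd ℂ) := by
      intro k
      ext i j
      simp only [hatSlice_apply, dftMatrix_eq, Matrix.map_apply]
      rw [map_sum]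
      refine Finset.sum_congr rfl fun m _ => ?_
      rw [RingHom.map_mul, Complex.conj_ofReal, zeta_pow_neg' hn]
    obtain ⟨D, hD1, hD2⟩ := svd_family hn (fun k => hatSlice A k) hAsym
    have hUsym : ∀ (k : Fin n3) (i j : Fin n1),
        (fun k => (D k).1) (-k) i j = (starRingEnd ℂ) ((fun k => (D k).1) k i j) := by
      intro k i j
      simp only
      rw [hD2 k]
      rfl
    have hVsym : ∀ (k : Fin n3) (i j : Fin n2),
        (fun k => (D k).2.2) (-k) i j = (starRingEnd ℂ) ((fun k => (D k).2.2) k i j) := by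
      intro k i j
      simp only
      rw [hD2 k]
      rfl
    have hssym : ∀ k : Fin n3, (D (-k)).2.1 = (D k).2.1 := by
      intro k
      rw [hD2 k]
      rfl
    have hSsym : ∀ (k : Fin n3) (i : Fin n1) (j : Fin n2),
        (fun k => (Matrix.of fun i j => (((D k).2.1 i j : ℝ) : ℂ))) (-k) i j
          = (starRingEnd ℂ)
            ((fun k => (Matrix.of fun i j => (((D k).2.1 i j : ℝ) : ℂ))) k i j) := by
      intro k i j
      simp only [Matrix.of_apply]
      rw [hssym k, Complex.conj_ofReal]
    set U := invDFT n3 (fun k => (D k).1) with hUdef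
    set S := invDFT n3 (fun k => (Matrix.of fun i j => (((D k).2.1 i j : ℝ) : ℂ))) with hSdef
    set V := invDFT n3 (fun k => (D k).2.2) with hVdef
    have hU : ∀ k, hatSlice U k = (D k).1 := hat_invDFT hn _ hUsym
    have hS : ∀ k, hatSlice S k = (Matrix.of fun i j => (((D k).2.1 i j : ℝ) : ℂ)) :=
      hat_invDFT hn _ hSsym
    have hV : ∀ k, hatSlice V k = (D k).2.2 := hat_invDFT hn _ hVsym
    refine ⟨U, S, V, ⟨⟨?_, ?_⟩, ⟨?_, ?_⟩, ?_, ?_⟩, ?_⟩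
    · apply hat_inj hn
      intro k
      rw [hat_tprod hn, hat_tT hn, hU k, hat_tI hn]
      exact (hD1 k).1
    · apply hat_inj hn
      intro k
      rw [hat_tprod hn, hat_tT hn, hU k, hat_tI hn]
      exact (hD1 k).2.1
    · apply hat_inj hn
      intro k
      rw [hat_tprod hn, hat_tT hn, hV k, hat_tI hn]
      exact (hD1 k).2.2.1
    · apply hat_inj hn
      intro k
      rw [hat_tprod hn, hat_tT hn, hV k, hat_tI hn]
      exact (hD1 k).2.2.2.1
    · intro i j m hij
      have hz : ∀ k : Fin n3, (((D k).2.1 i j : ℝ) : ℂ) = 0 := fun k => by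
        rw [(hD1 k).2.2.2.2.1 i j hij]
        exact Complex.ofReal_zero
      have hsum : (∑ k : Fin n3, (starRingEnd ℂ) (dftMatrix n3 k m) *
          (fun k => (Matrix.of fun i j => (((D k).2.1 i j : ℝ) : ℂ))) k i j) = 0 :=
        Finset.sum_eq_zero fun k _ => by
          simp only [Matrix.of_apply]
          rw [hz k, mul_zero]
      show (((n3 : ℂ))⁻¹ * ∑ k : Fin n3, (starRingEnd ℂ) (dftMatrix n3 k m) *
          (fun k => (Matrix.of fun i j => (((D k).2.1 i j : ℝ) : ℂ))) k i j).re = 0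
      rw [hsum, mul_zero, Complex.zero_re]
    · apply hat_inj hn
      intro k
      rw [hat_tprod hn, hat_tprod hn, hat_tT hn, hU k, hS k, hV k]
      exact (hD1 k).2.2.2.2.2.2.2
    · intro k
      have hentry : ∀ (i : Fin n1) (j : Fin n2),
          hatSlice S k i j = (((D k).2.1 i j : ℝ) : ℂ) := by
        intro i j
        rw [hS k]
        rfl
      constructor
      · intro i j _
        rw [hentry i j]
        exact ⟨Complex.ofReal_im _, by
          rw [Complex.ofReal_re]
          exact (hD1 k).2.2.2.2.2.1 i j⟩
      · intro i i' j j' hij hij' hii'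
        rw [hentry i j, hentry i' j', Complex.ofReal_re, Complex.ofReal_re]
        exact (hD1 k).2.2.2.2.2.2.1 i i' j j' hij hij' hii'
end

section
/- Let A = U * S * V^T be a t-SVD of A ∈ ℝ^{n1×n2×n3} and for each i set T_i = U(:,i,:) * S(i,i,:) * V(:,i,:)^T. Then the tensors T_i are pairwise orthogonal in the Frobenius inner product, ⟨T_i, T_j⟩ = 0 for i ≠ j, and ‖T_i‖_F = ‖S(i,i,:)‖_F for every i; in particular, whenever S(i,i,:) ≠ 0, the normalized tensor U(:,i,:) * (S(i,i,:)/‖S(i,i,:)‖_F) * V(:,i,:)^T has Frobenius norm one. -/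
open scoped BigOperators Matrix Kronecker ComplexConjugate
open Complex

open T3

section Aux

private lemma reorder7 {M : Type*} [AddCommMonoid M] {A B C D E F G : Type*}
    [Fintype A] [Fintype B] [Fintype C] [Fintype D] [Fintype E] [Fintype F] [Fintype G]
    (h : A → B → C → D → E → F → G → M) :
    (∑ a, ∑ b, ∑ c, ∑ d, ∑ e, ∑ f, ∑ g, h a b c d e f g)
      = ∑ e, ∑ g, ∑ f, ∑ d, ∑ b, ∑ c, ∑ a, h a b c d e f g := by
  have h1 : (∑ x : A × B × C × D × E × F × G,
      h x.1 x.2.1 x.2.2.1 x.2.2.2.1 x.2.2.2.2.1 x.2.2.2.2.2.1 x.2.2.2.2.2.2)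
      = ∑ a, ∑ b, ∑ c, ∑ d, ∑ e, ∑ f, ∑ g, h a b c d e f g := by
    simp only [Fintype.sum_prod_type]
  have h2 : (∑ y : E × G × F × D × B × C × A,
      h y.2.2.2.2.2.2 y.2.2.2.2.1 y.2.2.2.2.2.1 y.2.2.2.1 y.1 y.2.2.1 y.2.1)
      = ∑ e, ∑ g, ∑ f, ∑ d, ∑ b, ∑ c, ∑ a, h a b c d e f g := by
    simp only [Fintype.sum_prod_type]
  rw [← h1, ← h2]
  exact Fintype.sum_equiv
    (⟨fun x => (x.2.2.2.2.1, x.2.2.2.2.2.2, x.2.2.2.2.2.1, x.2.2.2.1, x.2.1, x.2.2.1, x.1),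
      fun y => (y.2.2.2.2.2.2, y.2.2.2.2.1, y.2.2.2.2.2.1, y.2.2.2.1, y.1, y.2.2.1, y.2.1),
      fun _ => rfl, fun _ => rfl⟩ :
      (A × B × C × D × E × F × G) ≃ (E × G × F × D × B × C × A)) _ _ (fun _ => rfl)

private lemma orth_scalar {n m : ℕ} [NeZero m] {Q : T3 n n m ℝ}
    (hQ : tprod (tT Q) Q = tI n m) (i j : Fin n) (k : Fin m) :
    (∑ q : Fin m, ∑ p : Fin n, Q p i (q - k) * Q p j q)
      = if i = j ∧ (k : ℕ) = 0 then 1 else 0 := by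
  have h := congrFun (congrFun (congrFun hQ i) j) k
  unfold T3.tprod T3.tT T3.tI at h
  rw [← h]
  exact Finset.sum_congr rfl fun q _ => Finset.sum_congr rfl fun p _ => by rw [neg_sub]

private lemma val_zero_iff {m : ℕ} [NeZero m] (a : Fin m) : (a : ℕ) = 0 ↔ a = 0 := by
  rw [Fin.ext_iff, Fin.val_zero]

private lemma key {n1 n2 n3 : ℕ} (U : T3 n1 n1 n3 ℝ) (V : T3 n2 n2 n3 ℝ)
    (hUo : tprod (tT U) U = tI n1 n3) (hVo : tprod (tT V) V = tI n2 n3)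
    (f g : Fin n3 → ℝ) (i j : Fin n1) (i' j' : Fin n2) :
    tInner (tprod (tprod (lat U i) (fun _ _ k => f k)) (tT (lat V i')))
      (tprod (tprod (lat U j) (fun _ _ k => g k)) (tT (lat V j')))
    = if i = j ∧ i' = j' then ∑ k, f k * g k else 0 := by
  rcases Nat.eq_zero_or_pos n3 with hn | hn
  · subst hn
    simp [T3.tInner]
  haveI : NeZero n3 := ⟨hn.ne'⟩
  have hX : ∀ (i : Fin n1) (i' : Fin n2) (f : Fin n3 → ℝ) (a : Fin n1) (b : Fin n2)
      (k : Fin n3),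
      tprod (tprod (lat U i) (fun _ _ k => f k)) (tT (lat V i')) a b k
        = ∑ q, ∑ r, U a i (k - q - r) * f r * V b i' (-q) := by
    intro i i' f a b k
    unfold T3.tprod T3.lat T3.tT
    simp only [Fin.sum_univ_one, Finset.sum_mul]
  have hUc : ∀ q1 r1 q2 r2 : Fin n3,
      (∑ k : Fin n3, ∑ a : Fin n1, U a i (k - q1 - r1) * U a j (k - q2 - r2))
        = if i = j ∧ q2 = q1 + r1 - r2 then 1 else 0 := by
    intro q1 r1 q2 r2
    have e1 : (∑ k : Fin n3, ∑ a : Fin n1, U a i (k - q1 - r1) * U a j (k - q2 - r2))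
        = ∑ k : Fin n3, ∑ a : Fin n1,
            U a i (k - (q1 + r1 - (q2 + r2))) * U a j k := by
      refine (Fintype.sum_equiv (Equiv.addRight (q2 + r2)) _ _ fun k => ?_).symm
      refine Finset.sum_congr rfl fun a _ => ?_
      have e2 : k + (q2 + r2) - q1 - r1 = k - (q1 + r1 - (q2 + r2)) := by abel
      have e3 : k + (q2 + r2) - q2 - r2 = k := by abel
      rw [Equiv.coe_addRight, e2, e3]
    rw [e1, orth_scalar hUo i j (q1 + r1 - (q2 + r2))]
    refine if_congr (and_congr_right fun _ => ?_) rfl rfl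
    rw [val_zero_iff, sub_eq_zero]
    exact ⟨fun h => eq_sub_iff_add_eq.mpr h.symm, fun h => (eq_sub_iff_add_eq.mp h).symm⟩
  have hVc : ∀ r1 r2 : Fin n3,
      (∑ q1 : Fin n3, ∑ b : Fin n2, V b i' (-q1) * V b j' (-(q1 + r1 - r2)))
        = if i' = j' ∧ r2 = r1 then 1 else 0 := by
    intro r1 r2
    have e1 : (∑ q1 : Fin n3, ∑ b : Fin n2, V b i' (-q1) * V b j' (-(q1 + r1 - r2)))
        = ∑ q : Fin n3, ∑ b : Fin n2, V b i' (q - (r2 - r1)) * V b j' q := by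
      refine Fintype.sum_equiv
        (⟨fun q1 => -(q1 + r1 - r2), fun q => -q - r1 + r2,
          fun x => by dsimp only; abel, fun x => by dsimp only; abel⟩ : Fin n3 ≃ Fin n3) _ _ fun q1 => ?_
      refine Finset.sum_congr rfl fun b _ => ?_
      have e2 : -(q1 + r1 - r2) - (r2 - r1) = -q1 := by abel
      rw [Equiv.coe_fn_mk, e2]
    rw [e1, orth_scalar hVo i' j' (r2 - r1)]
    refine if_congr (and_congr_right fun _ => ?_) rfl rfl
    rw [val_zero_iff, sub_eq_zero]
  have step1 : tInner (tprod (tprod (lat U i) (fun _ _ k => f k)) (tT (lat V i')))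
      (tprod (tprod (lat U j) (fun _ _ k => g k)) (tT (lat V j')))
      = ∑ a, ∑ b, ∑ k, ∑ q1, ∑ r1, ∑ q2, ∑ r2,
        (U a i (k - q2 - r2) * U a j (k - q1 - r1)) *
          ((V b i' (-q2) * V b j' (-q1)) * (f r2 * g r1)) := by
    unfold T3.tInner
    simp only [hX, Finset.sum_mul, Finset.mul_sum]
    refine Finset.sum_congr rfl fun a _ => Finset.sum_congr rfl fun b _ =>
      Finset.sum_congr rfl fun k _ => Finset.sum_congr rfl fun q1 _ =>
      Finset.sum_congr rfl fun r1 _ => Finset.sum_congr rfl fun q2 _ =>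
      Finset.sum_congr rfl fun r2 _ => by ring
  rw [step1, reorder7]
  simp only [← Finset.sum_mul, ← Finset.mul_sum]
  simp only [hUc, ite_mul, mul_ite, one_mul, mul_one, zero_mul, mul_zero]
  by_cases hij : i = j
  · subst hij
    simp only [eq_self_iff_true, true_and]
    simp only [Finset.sum_ite_eq', Finset.sum_ite_eq, Finset.mem_univ, if_true]
    simp only [← Finset.sum_mul]
    simp only [hVc, ite_mul, one_mul, zero_mul]
    by_cases hij' : i' = j'
    · subst hij'
      simp only [eq_self_iff_true, true_and]
      simp only [Finset.sum_ite_eq', Finset.sum_ite_eq, Finset.mem_univ, if_true]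
    · simp [hij']
  · simp [hij]

end Aux
/-- the rank-one terms `T_i = U(:,i,:) * S(i,i,:) * V(:,i,:)ᵀ` of a t-SVD
are pairwise Frobenius-orthogonal, `‖T_i‖_F = ‖S(i,i,:)‖_F`, and whenever `S(i,i,:) ≠ 0`
the normalized tensor has Frobenius norm one. -/
theorem stmt_6 (n1 n2 n3 : ℕ) (A : T3 n1 n2 n3 ℝ) (U : T3 n1 n1 n3 ℝ)
    (S : T3 n1 n2 n3 ℝ) (V : T3 n2 n2 n3 ℝ) (h : IsTSVD A U S V) :
    (∀ i j : Fin (min n1 n2), i ≠ j →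
      tInner
        (rankOne U S V (Fin.castLE (Nat.min_le_left n1 n2) i)
          (Fin.castLE (Nat.min_le_right n1 n2) i))
        (rankOne U S V (Fin.castLE (Nat.min_le_left n1 n2) j)
          (Fin.castLE (Nat.min_le_right n1 n2) j)) = 0) ∧
    (∀ i : Fin (min n1 n2),
      tNorm
        (rankOne U S V (Fin.castLE (Nat.min_le_left n1 n2) i)
          (Fin.castLE (Nat.min_le_right n1 n2) i)) =
      tNorm (tube S (Fin.castLE (Nat.min_le_left n1 n2) i)
          (Fin.castLE (Nat.min_le_right n1 n2) i))) ∧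
    (∀ i : Fin (min n1 n2),
      tube S (Fin.castLE (Nat.min_le_left n1 n2) i)
          (Fin.castLE (Nat.min_le_right n1 n2) i) ≠ 0 →
      tNorm
        (tprod
          (tprod (lat U (Fin.castLE (Nat.min_le_left n1 n2) i))
            (fun _ _ k => S (Fin.castLE (Nat.min_le_left n1 n2) i)
                (Fin.castLE (Nat.min_le_right n1 n2) i) k /
              tNorm (tube S (Fin.castLE (Nat.min_le_left n1 n2) i)
                (Fin.castLE (Nat.min_le_right n1 n2) i))))
          (tT (lat V (Fin.castLE (Nat.min_le_right n1 n2) i)))) = 1) := by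
  obtain ⟨hU, hV, -, -⟩ := h
  have hUo := hU.1
  have hVo := hV.1
  have key' : ∀ (f g : Fin n3 → ℝ) (i j : Fin n1) (i' j' : Fin n2),
      tInner (tprod (tprod (lat U i) (fun _ _ k => f k)) (tT (lat V i')))
        (tprod (tprod (lat U j) (fun _ _ k => g k)) (tT (lat V j')))
      = if i = j ∧ i' = j' then ∑ k, f k * g k else 0 :=
    fun f g i j i' j' => key U V hUo hVo f g i j i' j'
  refine ⟨?_, ?_, ?_⟩
  · intro i j hij
    have hk := key' (fun k => S (Fin.castLE (Nat.min_le_left n1 n2) i)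
        (Fin.castLE (Nat.min_le_right n1 n2) i) k)
      (fun k => S (Fin.castLE (Nat.min_le_left n1 n2) j)
        (Fin.castLE (Nat.min_le_right n1 n2) j) k)
      (Fin.castLE (Nat.min_le_left n1 n2) i) (Fin.castLE (Nat.min_le_left n1 n2) j)
      (Fin.castLE (Nat.min_le_right n1 n2) i) (Fin.castLE (Nat.min_le_right n1 n2) j)
    unfold T3.rankOne T3.tube
    rw [hk, if_neg]
    rintro ⟨h1, -⟩
    exact hij (Fin.castLE_injective _ h1)
  · intro i
    have hk := key' (fun k => S (Fin.castLE (Nat.min_le_left n1 n2) i)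
        (Fin.castLE (Nat.min_le_right n1 n2) i) k)
      (fun k => S (Fin.castLE (Nat.min_le_left n1 n2) i)
        (Fin.castLE (Nat.min_le_right n1 n2) i) k)
      (Fin.castLE (Nat.min_le_left n1 n2) i) (Fin.castLE (Nat.min_le_left n1 n2) i)
      (Fin.castLE (Nat.min_le_right n1 n2) i) (Fin.castLE (Nat.min_le_right n1 n2) i)
    rw [if_pos ⟨rfl, rfl⟩] at hk
    unfold T3.tNorm T3.rankOne T3.tube
    rw [hk]
    congr 1
    unfold T3.tInner
    simp [Fin.sum_univ_one]
  · intro i hne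
    set i₁ := Fin.castLE (Nat.min_le_left n1 n2) i with hi1
    set i₂ := Fin.castLE (Nat.min_le_right n1 n2) i with hi2
    set s : ℝ := ∑ k, S i₁ i₂ k * S i₁ i₂ k with hs
    have hspos : 0 < s := by
      by_contra hle
      apply hne
      have hz : ∀ k, S i₁ i₂ k = 0 := by
        intro k
        by_contra hk
        exact hle (Finset.sum_pos' (fun k _ => mul_self_nonneg _)
          ⟨k, Finset.mem_univ _, mul_self_pos.mpr hk⟩)
      funext a b k
      exact hz k
    have hcnorm : tNorm (tube S i₁ i₂) = Real.sqrt s := by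
      unfold T3.tNorm T3.tInner T3.tube
      congr 1
      simp [Fin.sum_univ_one, hs]
    have hc2 : tNorm (tube S i₁ i₂) * tNorm (tube S i₁ i₂) = s := by
      rw [hcnorm, Real.mul_self_sqrt hspos.le]
    have hk := key' (fun k => S i₁ i₂ k / tNorm (tube S i₁ i₂))
      (fun k => S i₁ i₂ k / tNorm (tube S i₁ i₂)) i₁ i₁ i₂ i₂
    rw [if_pos ⟨rfl, rfl⟩] at hk
    show Real.sqrt (tInner _ _) = 1
    rw [hk]
    have : (∑ k, S i₁ i₂ k / tNorm (tube S i₁ i₂) * (S i₁ i₂ k / tNorm (tube S i₁ i₂))) = 1 := by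
      simp only [div_mul_div_comm]
      rw [← Finset.sum_div, hc2, ← hs, div_self hspos.ne']
    rw [this, Real.sqrt_one]
end

section
/- Let A ∈ ℝ^{n1×n2×n3} be nonzero with an ordered t-SVD A = U * S * V^T, and let M₁ = U(:,1,:) * (S(1,1,:)/‖S(1,1,:)‖_F) * V(:,1,:)^T be the normalized leading rank-one tensor of A. Then ⟨M₁, A⟩ = ‖S(1,1,:)‖_F. -/
open scoped BigOperators Matrix Kronecker ComplexConjugate
open Complex

open T3


namespace T3
section Aux

variable {n1 n2 n3 l : ℕ}

lemma bcirc_tprod [NeZero n3] (A : T3 n1 n2 n3 ℝ) (B : T3 n2 l n3 ℝ) :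
    bcirc (tprod A B) = bcirc A * bcirc B := by
  ext ⟨k, i⟩ ⟨k', j⟩
  simp only [bcirc, tprod, Matrix.mul_apply, Fintype.sum_prod_type]
  refine Fintype.sum_equiv (Equiv.addRight k') _ _
    (fun q => Finset.sum_congr rfl fun p _ => ?_)
  simp [sub_sub, add_comm]

lemma bcirc_tT [NeZero n3] (A : T3 n1 n2 n3 ℝ) : bcirc (tT A) = (bcirc A)ᵀ := by
  ext ⟨k, j⟩ ⟨k', i⟩
  simp [bcirc, tT, Matrix.transpose_apply, neg_sub]

lemma tInner_comm3 (X Y : T3 n1 n2 n3 ℝ) :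
    tInner X Y = ∑ j, ∑ k, ∑ i, X i j k * Y i j k := by
  rw [tInner, Finset.sum_comm]
  exact Finset.sum_congr rfl fun j _ => Finset.sum_comm

lemma trace_form [NeZero n3] (X Y : T3 n1 n2 n3 ℝ) :
    Matrix.trace ((bcirc X)ᵀ * bcirc Y) = (n3 : ℝ) * tInner X Y := by
  rw [Matrix.trace]
  simp only [Matrix.diag_apply, Matrix.mul_apply, Matrix.transpose_apply, bcirc,
    Fintype.sum_prod_type]
  have h1 : ∀ k' : Fin n3, ∀ j : Fin n2,
      (∑ k : Fin n3, ∑ i, X i j k * Y i j k)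
        = ∑ k : Fin n3, ∑ i, X i j (k - k') * Y i j (k - k') := by
    intro k' j
    refine Fintype.sum_equiv (Equiv.addRight k') _ _ (fun k => ?_)
    simp
  calc (∑ k' : Fin n3, ∑ j, ∑ k : Fin n3, ∑ i, X i j (k - k') * Y i j (k - k'))
      = ∑ _k' : Fin n3, ∑ j, ∑ k : Fin n3, ∑ i, X i j k * Y i j k :=
        Finset.sum_congr rfl fun k' _ => Finset.sum_congr rfl fun j _ => (h1 k' j).symm
    _ = (n3 : ℝ) * tInner X Y := by
        rw [Finset.sum_const, Finset.card_univ, Fintype.card_fin, nsmul_eq_mul, tInner_comm3]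

lemma lat_orth_row {n m : ℕ} (U : T3 n n m ℝ) (hU : tprod (tT U) U = tI n m) (i0 : Fin n) :
    tprod (tT (lat U i0)) U = fun (_ : Fin 1) b k => tI n m i0 b k := by
  funext a b k
  have h := congrFun (congrFun (congrFun hU i0) b) k
  simp only [tprod, tT, lat] at h ⊢
  exact h

lemma lat_orth_col {n m : ℕ} (V : T3 n n m ℝ) (hV : tprod (tT V) V = tI n m) (j0 : Fin n) :
    tprod (tT V) (lat V j0) = fun a (_ : Fin 1) k => tI n m a j0 k := by
  funext a b k
  have h := congrFun (congrFun (congrFun hV a) j0) k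
  simp only [tprod, tT, lat] at h ⊢
  exact h

lemma tprod_tIrow [NeZero n3] (S : T3 n1 n2 n3 ℝ) (i0 : Fin n1) :
    tprod (fun (_ : Fin 1) b k => tI n1 n3 i0 b k) S = fun (_ : Fin 1) j k => S i0 j k := by
  funext a j k
  simp only [tprod, tI]
  rw [Finset.sum_eq_single k]
  · simp
  · intro q _ hq
    have hne : ((k - q : Fin n3) : ℕ) ≠ 0 := by
      rw [← Fin.val_zero n3]
      simp only [ne_eq, ← Fin.ext_iff, sub_eq_zero]
      exact fun hkq => hq hkq.symm
    simp [hne]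
  · simp

lemma tprod_tIcol [NeZero n3] (W : T3 1 n2 n3 ℝ) (j0 : Fin n2) :
    tprod W (fun a (_ : Fin 1) k => tI n2 n3 a j0 k) = fun i (_ : Fin 1) k => W i j0 k := by
  funext i b k
  simp only [tprod, tI]
  rw [Finset.sum_eq_single (0 : Fin n3)]
  · simp
  · intro q _ hq
    have hq' : (q : ℕ) ≠ 0 := by
      rw [← Fin.val_zero n3]
      exact fun h0 => hq (Fin.ext h0)
    simp [hq']
  · simp

end Aux
end T3

/-- for nonzero `A` with ordered t-SVD `A = U * S * Vᵀ` and normalized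
leading rank-one tensor `M₁`, one has `⟨M₁, A⟩ = ‖S(1,1,:)‖_F`. -/
theorem stmt_7 (n1 n2 n3 : ℕ) (hn1 : 0 < n1) (hn2 : 0 < n2)
    (A : T3 n1 n2 n3 ℝ) (hA : A ≠ 0) (U : T3 n1 n1 n3 ℝ) (S : T3 n1 n2 n3 ℝ)
    (V : T3 n2 n2 n3 ℝ) (h : IsOrderedTSVD A U S V) :
    tInner (leadM hn1 hn2 U S V) A = tNorm (tube S ⟨0, hn1⟩ ⟨0, hn2⟩) := by
  rcases Nat.eq_zero_or_pos n3 with h3 | h3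
  · exfalso
    apply hA
    subst h3
    funext i j k
    exact k.elim0
  haveI : NeZero n3 := ⟨h3.ne'⟩
  obtain ⟨⟨hUo, hVo, hSd, hAeq⟩, _hord⟩ := h
  have hU := hUo.1
  have hV := hVo.1
  set T' : T3 1 1 n3 ℝ :=
    (fun _ _ k => S ⟨0, hn1⟩ ⟨0, hn2⟩ k / tNorm (tube S ⟨0, hn1⟩ ⟨0, hn2⟩)) with hT'
  have hM : leadM hn1 hn2 U S V
      = tprod (tprod (lat U ⟨0, hn1⟩) T') (tT (lat V ⟨0, hn2⟩)) := rfl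
  have e1 := lat_orth_row U hU ⟨0, hn1⟩
  have e2 := lat_orth_col V hV ⟨0, hn2⟩
  have e3 := tprod_tIrow S ⟨0, hn1⟩
  have e4 : tprod (fun (_ : Fin 1) j k => S ⟨0, hn1⟩ j k)
      (fun a (_ : Fin 1) k => tI n2 n3 a ⟨0, hn2⟩ k) = tube S ⟨0, hn1⟩ ⟨0, hn2⟩ :=
    tprod_tIcol _ _
  have m1 : (bcirc (lat U ⟨0, hn1⟩))ᵀ * bcirc U
      = bcirc (fun (_ : Fin 1) b k => tI n1 n3 ⟨0, hn1⟩ b k) := by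
    rw [← bcirc_tT, ← bcirc_tprod, e1]
  have m2 : (bcirc V)ᵀ * bcirc (lat V ⟨0, hn2⟩)
      = bcirc (fun a (_ : Fin 1) k => tI n2 n3 a ⟨0, hn2⟩ k) := by
    rw [← bcirc_tT, ← bcirc_tprod, e2]
  have m3 : bcirc (fun (_ : Fin 1) b k => tI n1 n3 ⟨0, hn1⟩ b k) * bcirc S
      = bcirc (fun (_ : Fin 1) j k => S ⟨0, hn1⟩ j k) := by
    rw [← bcirc_tprod, e3]
  have m4 : bcirc (fun (_ : Fin 1) j k => S ⟨0, hn1⟩ j k)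
        * bcirc (fun a (_ : Fin 1) k => tI n2 n3 a ⟨0, hn2⟩ k)
      = bcirc (tube S ⟨0, hn1⟩ ⟨0, hn2⟩) := by
    rw [← bcirc_tprod, e4]
  have hmid : (bcirc (lat U ⟨0, hn1⟩))ᵀ * (bcirc U * (bcirc S
        * ((bcirc V)ᵀ * bcirc (lat V ⟨0, hn2⟩))))
      = bcirc (tube S ⟨0, hn1⟩ ⟨0, hn2⟩) := by
    rw [m2, ← Matrix.mul_assoc, ← Matrix.mul_assoc, m1, m3, m4]
  have key : tInner (leadM hn1 hn2 U S V) A = tInner T' (tube S ⟨0, hn1⟩ ⟨0, hn2⟩) := by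
    have hc3 : (n3 : ℝ) ≠ 0 := Nat.cast_ne_zero.mpr h3.ne'
    apply mul_left_cancel₀ hc3
    rw [← trace_form, ← trace_form, hM, hAeq,
      bcirc_tprod, bcirc_tprod, bcirc_tprod, bcirc_tprod, bcirc_tT, bcirc_tT,
      Matrix.transpose_mul, Matrix.transpose_mul, Matrix.transpose_transpose]
    simp only [Matrix.mul_assoc]
    rw [Matrix.trace_mul_comm]
    simp only [Matrix.mul_assoc]
    rw [hmid]
  rw [key]
  have hfin : tInner T' (tube S ⟨0, hn1⟩ ⟨0, hn2⟩)
      = (∑ k, S ⟨0, hn1⟩ ⟨0, hn2⟩ k * S ⟨0, hn1⟩ ⟨0, hn2⟩ k)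
          / tNorm (tube S ⟨0, hn1⟩ ⟨0, hn2⟩) := by
    simp only [tInner, tube, hT', Fin.sum_univ_one]
    rw [Finset.sum_div]
    exact Finset.sum_congr rfl fun k _ => div_mul_eq_mul_div _ _ _
  have hnorm : tNorm (tube S ⟨0, hn1⟩ ⟨0, hn2⟩)
      = Real.sqrt (∑ k, S ⟨0, hn1⟩ ⟨0, hn2⟩ k * S ⟨0, hn1⟩ ⟨0, hn2⟩ k) := by
    simp [tNorm, tInner, tube, Fin.sum_univ_one]
  rw [hfin, hnorm]
  exact Real.div_sqrt
end

section
/- Let A ∈ ℝ^{n1×n2×n3} have an ordered t-SVD A = U * S * V^T. Then the leading singular tube dominates in the sense that ‖S(1,1,:)‖_F² ≥ ‖A‖_F² / min(n1,n2). -/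
open scoped BigOperators Matrix Kronecker ComplexConjugate
open Complex

open T3

namespace TSVDAux
open T3

noncomputable def W (n : ℕ) : ℂ := Complex.exp (-(2 * (Real.pi : ℂ) * Complex.I) / (n : ℂ))

lemma dftMatrix_eq (n : ℕ) (a b : Fin n) : dftMatrix n a b = W n ^ ((a:ℕ) * (b:ℕ)) := rfl

lemma W_pow_n {n : ℕ} (hn : 0 < n) : W n ^ n = 1 := by
  rw [W, ← Complex.exp_nat_mul]
  have h : (n:ℂ) ≠ 0 := Nat.cast_ne_zero.mpr hn.ne'
  rw [mul_div_cancel₀ _ h, Complex.exp_neg, Complex.exp_two_pi_mul_I, inv_one]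

lemma conj_W {n : ℕ} : (starRingEnd ℂ) (W n) = (W n)⁻¹ := by
  rw [W, ← Complex.exp_conj, ← Complex.exp_neg]
  congr 1
  simp [Complex.conj_I, map_ofNat]
  ring

lemma W_pow_mod {n : ℕ} (hn : 0 < n) (a : ℕ) : W n ^ (a % n) = W n ^ a := by
  conv_rhs => rw [← Nat.div_add_mod a n]
  rw [pow_add, pow_mul, W_pow_n hn, one_pow, one_mul]

lemma W_pow_congr {n : ℕ} (hn : 0 < n) {a b : ℕ} (h : a % n = b % n) :
    W n ^ a = W n ^ b := by
  rw [← W_pow_mod hn a, h, W_pow_mod hn b]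

lemma conj_W_pow {n : ℕ} (a : ℕ) : (starRingEnd ℂ) (W n ^ a) = (W n ^ a)⁻¹ := by
  rw [map_pow, conj_W, inv_pow]

lemma W_prim {n : ℕ} (hn : 0 < n) : IsPrimitiveRoot (W n) n := by
  have h := Complex.isPrimitiveRoot_exp n hn.ne'
  have e : W n = (Complex.exp (2 * Real.pi * Complex.I / n))⁻¹ := by
    rw [W, ← Complex.exp_neg]; congr 1; ring
  rw [e]
  exact h.inv

lemma W_ne_zero {n : ℕ} : W n ≠ 0 := Complex.exp_ne_zero _

lemma conj_W_pow_eq {n : ℕ} (hn : 0 < n) (k m : ℕ) (hm : m < n) :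
    W n ^ (k * ((n - m) % n)) = (starRingEnd ℂ) (W n ^ (k * m)) := by
  rw [conj_W_pow]
  apply eq_inv_of_mul_eq_one_left
  rw [← pow_add]
  have h1 : k * ((n - m) % n) ≡ k * (n - m) [MOD n] := (Nat.mod_modEq (n-m) n).mul_left k
  have h2 : k * ((n - m) % n) + k * m ≡ k * (n - m) + k * m [MOD n] := h1.add_right _
  have h3 : k * (n - m) + k * m = k * n := by
    rw [← Nat.mul_add, Nat.sub_add_cancel hm.le]
  have h4 : k * n ≡ 0 [MOD n] := (Nat.modEq_zero_iff_dvd).mpr ⟨k, mul_comm k n⟩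
  have h5 : k * ((n - m) % n) + k * m ≡ 0 [MOD n] := h2.trans (h3 ▸ h4)
  rw [W_pow_congr hn h5, pow_zero]

lemma conj_W_fin {n : ℕ} (k : ℕ) (m : Fin n) :
    (starRingEnd ℂ) (W n ^ (k * (m:ℕ))) = W n ^ (k * ((-m : Fin n) : ℕ)) := by
  have hn : 0 < n := m.pos
  have hval : ((-m : Fin n) : ℕ) = (n - (m:ℕ)) % n := by rw [Fin.neg_def]
  rw [hval]
  exact (conj_W_pow_eq hn k m m.2).symm

lemma W_pow_val_add {n : ℕ} [NeZero n] (k : ℕ) (r q : Fin n) :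
    W n ^ (k * ((r + q : Fin n) : ℕ)) = W n ^ (k * (r:ℕ)) * W n ^ (k * (q:ℕ)) := by
  have hn : 0 < n := Nat.pos_of_ne_zero (NeZero.ne n)
  rw [← pow_add, ← Nat.mul_add]
  apply W_pow_congr hn
  rw [Fin.val_add]
  exact ((Nat.mod_modEq _ _).mul_left k)

lemma dft_orth {n : ℕ} (hn : 0 < n) (m m' : Fin n) :
    ∑ k : Fin n, W n ^ ((k:ℕ) * (m:ℕ)) * (starRingEnd ℂ) (W n ^ ((k:ℕ) * (m':ℕ))) =
      if m = m' then (n : ℂ) else 0 := by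
  have key : ∀ k : Fin n, W n ^ ((k:ℕ) * (m:ℕ)) * (starRingEnd ℂ) (W n ^ ((k:ℕ) * (m':ℕ)))
      = (W n ^ (m:ℕ) * (W n ^ (m':ℕ))⁻¹) ^ (k:ℕ) := by
    intro k
    rw [conj_W_pow, mul_pow, inv_pow, ← pow_mul, ← pow_mul,
      mul_comm (m:ℕ) (k:ℕ), mul_comm (m':ℕ) (k:ℕ)]
  simp_rw [key]
  rw [Fin.sum_univ_eq_sum_range]
  by_cases h : m = m'
  · subst h
    rw [mul_inv_cancel₀ (pow_ne_zero _ W_ne_zero)]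
    simp
  · set ζ : ℂ := W n ^ (m:ℕ) * (W n ^ (m':ℕ))⁻¹ with hζ
    have hζn : ζ ^ n = 1 := by
      rw [hζ, mul_pow, ← pow_mul, inv_pow, ← pow_mul, mul_comm (m:ℕ) n, mul_comm (m':ℕ) n,
        pow_mul, pow_mul, W_pow_n hn, one_pow, one_pow, inv_one, mul_one]
    have hζ1 : ζ ≠ 1 := by
      intro hc
      rw [hζ, ← div_eq_mul_inv] at hc
      have : W n ^ (m:ℕ) = W n ^ (m':ℕ) :=
        (div_eq_one_iff_eq (pow_ne_zero _ W_ne_zero)).mp hc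
      exact h (Fin.ext ((W_prim hn).pow_inj m.2 m'.2 this))
    rw [geom_sum_eq hζ1, hζn, sub_self, zero_div, if_neg h]

lemma parseval {n : ℕ} (hn : 0 < n) (x : Fin n → ℝ) :
    ∑ k : Fin n, (Complex.normSq (∑ m : Fin n, W n ^ ((k:ℕ) * (m:ℕ)) * (x m : ℂ)) : ℂ)
      = (n : ℂ) * ∑ m : Fin n, ((x m : ℂ)) ^ 2 := by
  have e1 : ∀ k : Fin n, (Complex.normSq (∑ m : Fin n, W n ^ ((k:ℕ) * (m:ℕ)) * (x m : ℂ)) : ℂ)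
      = ∑ m : Fin n, ∑ m' : Fin n,
          (x m : ℂ) * (x m' : ℂ) * (W n ^ ((k:ℕ) * (m:ℕ)) * (starRingEnd ℂ) (W n ^ ((k:ℕ) * (m':ℕ)))) := by
    intro k
    rw [← Complex.mul_conj, map_sum, Finset.sum_mul_sum]
    refine Finset.sum_congr rfl fun m _ => Finset.sum_congr rfl fun m' _ => ?_
    rw [map_mul, Complex.conj_ofReal]
    ring
  simp_rw [e1]
  rw [Finset.sum_comm]
  have h2 : ∀ m : Fin n, ∑ k : Fin n, ∑ m' : Fin n,
      (x m : ℂ) * (x m' : ℂ) * (W n ^ ((k:ℕ) * (m:ℕ)) * (starRingEnd ℂ) (W n ^ ((k:ℕ) * (m':ℕ)))) =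
      (n : ℂ) * (x m : ℂ)^2 := by
    intro m
    rw [Finset.sum_comm]
    have h3 : ∀ m' : Fin n, ∑ k : Fin n,
        (x m : ℂ) * (x m' : ℂ) * (W n ^ ((k:ℕ) * (m:ℕ)) * (starRingEnd ℂ) (W n ^ ((k:ℕ) * (m':ℕ))))
        = (x m : ℂ) * (x m' : ℂ) * (if m = m' then (n:ℂ) else 0) := by
      intro m'
      rw [← Finset.mul_sum, dft_orth hn]
    simp_rw [h3, mul_ite, mul_zero]
    rw [Finset.sum_ite_eq]
    simp
    ring
  simp_rw [h2]
  rw [Finset.mul_sum]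

lemma parsevalR {n : ℕ} (hn : 0 < n) (x : Fin n → ℝ) :
    ∑ k : Fin n, Complex.normSq (∑ m : Fin n, W n ^ ((k:ℕ) * (m:ℕ)) * (x m : ℂ))
      = (n : ℝ) * ∑ m : Fin n, (x m) ^ 2 := by
  exact_mod_cast parseval hn x

variable {n1 n2 n3 l : ℕ}

lemma hatSlice_tprod (A : T3 n1 n2 n3 ℝ) (B : T3 n2 l n3 ℝ) (k : Fin n3) :
    hatSlice (tprod A B) k = hatSlice A k * hatSlice B k := by
  have hn3 : 0 < n3 := k.pos
  haveI : NeZero n3 := ⟨hn3.ne'⟩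
  funext i j
  rw [Matrix.mul_apply]
  show (∑ m : Fin n3, dftMatrix n3 k m *
      ((∑ q : Fin n3, ∑ p : Fin n2, A i p (m - q) * B p j q : ℝ) : ℂ)) = _
  have lhs1 : ∀ m : Fin n3, dftMatrix n3 k m *
        ((∑ q : Fin n3, ∑ p : Fin n2, A i p (m - q) * B p j q : ℝ) : ℂ)
      = ∑ q : Fin n3, ∑ p : Fin n2, dftMatrix n3 k m * (A i p (m-q) : ℂ) * (B p j q : ℂ) := by
    intro m
    push_cast
    rw [Finset.mul_sum]
    refine Finset.sum_congr rfl fun q _ => ?_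
    rw [Finset.mul_sum]
    refine Finset.sum_congr rfl fun p _ => ?_
    ring
  calc (∑ m : Fin n3, dftMatrix n3 k m *
      ((∑ q : Fin n3, ∑ p : Fin n2, A i p (m - q) * B p j q : ℝ) : ℂ))
      = ∑ q : Fin n3, ∑ p : Fin n2, ∑ m : Fin n3,
          dftMatrix n3 k m * (A i p (m-q) : ℂ) * (B p j q : ℂ) := by
        simp_rw [lhs1]
        rw [Finset.sum_comm]
        exact Finset.sum_congr rfl fun q _ => Finset.sum_comm
    _ = ∑ q : Fin n3, ∑ p : Fin n2,
          (∑ r : Fin n3, dftMatrix n3 k r * (A i p r : ℂ)) * (dftMatrix n3 k q * (B p j q : ℂ)) := by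
        refine Finset.sum_congr rfl fun q _ => Finset.sum_congr rfl fun p _ => ?_
        rw [Finset.sum_mul]
        refine (Fintype.sum_equiv (Equiv.addRight q) _ _ fun r => ?_).symm
        show dftMatrix n3 k r * (A i p r : ℂ) * (dftMatrix n3 k q * (B p j q : ℂ))
          = dftMatrix n3 k (r + q) * (A i p (r + q - q) : ℂ) * (B p j q : ℂ)
        rw [add_sub_cancel_right, dftMatrix_eq, dftMatrix_eq, dftMatrix_eq, W_pow_val_add]
        ring
    _ = ∑ p : Fin n2, hatSlice A k i p * hatSlice B k p j := by
        rw [Finset.sum_comm]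
        refine Finset.sum_congr rfl fun p _ => ?_
        rw [← Finset.mul_sum]
        rfl

lemma hatSlice_tT (A : T3 n1 n2 n3 ℝ) (k : Fin n3) :
    hatSlice (tT A) k = (hatSlice A k)ᴴ := by
  have hn3 : 0 < n3 := k.pos
  haveI : NeZero n3 := ⟨hn3.ne'⟩
  funext j i
  rw [Matrix.conjTranspose_apply]
  show (∑ m : Fin n3, dftMatrix n3 k m * ((A i j (-m) : ℝ) : ℂ))
    = (starRingEnd ℂ) (∑ m : Fin n3, dftMatrix n3 k m * (A i j m : ℂ))
  rw [map_sum]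
  refine (Fintype.sum_equiv (Equiv.neg (Fin n3)) _ _ fun m => ?_).symm
  show (starRingEnd ℂ) (dftMatrix n3 k m * (A i j m : ℂ))
    = dftMatrix n3 k (-m) * ((A i j (-(-m)) : ℝ) : ℂ)
  rw [neg_neg, map_mul, Complex.conj_ofReal, dftMatrix_eq, dftMatrix_eq, conj_W_fin]

lemma hatSlice_tI {q m : ℕ} (k : Fin m) : hatSlice (tI q m) k = 1 := by
  have hm : 0 < m := k.pos
  funext i j
  show (∑ x : Fin m, dftMatrix m k x * ((if i = j ∧ (x:ℕ) = 0 then (1:ℝ) else 0 : ℝ) : ℂ)) = _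
  rw [Finset.sum_eq_single (⟨0, hm⟩ : Fin m)]
  · simp [dftMatrix_eq, Matrix.one_apply, apply_ite]
  · intro x _ hx
    have hxv : ¬((x:ℕ) = 0) := fun hc => hx (Fin.ext hc)
    simp [hxv]
  · simp

lemma trace_frob {a b : ℕ} (N : Matrix (Fin a) (Fin b) ℂ) :
    (Nᴴ * N).trace = ∑ i, ∑ j, (Complex.normSq (N i j) : ℂ) := by
  rw [Matrix.trace]
  simp only [Matrix.diag_apply, Matrix.mul_apply, Matrix.conjTranspose_apply]
  rw [Finset.sum_comm]
  refine Finset.sum_congr rfl fun i _ => Finset.sum_congr rfl fun j _ => ?_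
  rw [mul_comm]
  exact Complex.mul_conj _

lemma frob_unitary {a b : ℕ} (U : Matrix (Fin a) (Fin a) ℂ) (M : Matrix (Fin a) (Fin b) ℂ)
    (Vm : Matrix (Fin b) (Fin b) ℂ) (hU : Uᴴ * U = 1) (hV : Vmᴴ * Vm = 1) :
    ∑ i, ∑ j, Complex.normSq ((U * M * Vmᴴ) i j) = ∑ i, ∑ j, Complex.normSq (M i j) := by
  have key : (U * M * Vmᴴ)ᴴ * (U * M * Vmᴴ) = Vm * ((Mᴴ * M) * Vmᴴ) := by
    calc (U * M * Vmᴴ)ᴴ * (U * M * Vmᴴ)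
        = Vm * (Mᴴ * ((Uᴴ * U) * (M * Vmᴴ))) := by
          rw [Matrix.conjTranspose_mul, Matrix.conjTranspose_mul,
            Matrix.conjTranspose_conjTranspose]
          simp only [Matrix.mul_assoc]
      _ = Vm * ((Mᴴ * M) * Vmᴴ) := by rw [hU, Matrix.one_mul, Matrix.mul_assoc]
  have hc : (∑ i, ∑ j, (Complex.normSq ((U * M * Vmᴴ) i j) : ℂ))
      = ∑ i, ∑ j, (Complex.normSq (M i j) : ℂ) := by
    rw [← trace_frob, ← trace_frob, key, Matrix.trace_mul_comm, Matrix.mul_assoc, hV,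
      Matrix.mul_one]
  exact_mod_cast hc

lemma hatSlice_fdiag {S : T3 n1 n2 n3 ℝ} (hS : FDiag S) (k : Fin n3)
    (i : Fin n1) (j : Fin n2) (hij : (i:ℕ) ≠ (j:ℕ)) : hatSlice S k i j = 0 := by
  show (∑ m : Fin n3, dftMatrix n3 k m * ((S i j m : ℝ) : ℂ)) = 0
  refine Finset.sum_eq_zero fun m _ => ?_
  rw [hS i j m hij]
  simp

lemma count_bound {n1 n2 : ℕ} (c : ℝ) (hcnn : 0 ≤ c) :
    ∑ i : Fin n1, ∑ j : Fin n2, (if (i:ℕ) = (j:ℕ) then c else 0) ≤ ((min n1 n2 : ℕ) : ℝ) * c := by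
  have inner : ∀ i : Fin n1, (∑ j : Fin n2, if (i:ℕ) = (j:ℕ) then c else 0)
      = if (i:ℕ) < n2 then c else 0 := by
    intro i
    by_cases h : (i:ℕ) < n2
    · rw [if_pos h, Finset.sum_eq_single (⟨(i:ℕ), h⟩ : Fin n2)]
      · simp
      · intro j _ hj
        rw [if_neg]
        intro hc'
        exact hj (Fin.ext (by simpa using hc'.symm))
      · simp
    · rw [if_neg h]
      refine Finset.sum_eq_zero fun j _ => ?_
      rw [if_neg]
      intro hc'
      exact h (hc' ▸ j.2)
  simp_rw [inner]
  have e1 : (∑ i : Fin n1, if (i:ℕ) < n2 then c else 0)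
      = ((Finset.univ.filter (fun i : Fin n1 => (i:ℕ) < n2)).card : ℝ) * c := by
    rw [Finset.sum_ite, Finset.sum_const, Finset.sum_const_zero, add_zero, nsmul_eq_mul]
  rw [e1]
  have hcard : (Finset.univ.filter (fun i : Fin n1 => (i:ℕ) < n2)).card ≤ min n1 n2 := by
    refine le_min ?_ ?_
    · exact (Finset.card_filter_le _ _).trans_eq (by simp)
    · have := Finset.card_le_card_of_injOn (fun i : Fin n1 => (i:ℕ))
        (s := Finset.univ.filter (fun i : Fin n1 => (i:ℕ) < n2)) (t := Finset.range n2)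
        (fun i hi => by
          replace hi := Finset.mem_filter.mp hi
          simpa using hi.2)
        (fun a _ b _ hab => Fin.ext hab)
      simpa using this
  exact mul_le_mul_of_nonneg_right (Nat.cast_le.mpr hcard) hcnn

lemma slice_bound (hn1 : 0 < n1) (hn2 : 0 < n2) (S : T3 n1 n2 n3 ℝ)
    (hd : FDiag S) (ho : OrderedDiag S) (k : Fin n3) :
    ∑ i, ∑ j, Complex.normSq (hatSlice S k i j)
      ≤ ((min n1 n2 : ℕ) : ℝ) * Complex.normSq (hatSlice S k ⟨0,hn1⟩ ⟨0,hn2⟩) := by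
  set c := Complex.normSq (hatSlice S k ⟨0,hn1⟩ ⟨0,hn2⟩) with hc
  have hterm : ∀ (i : Fin n1) (j : Fin n2),
      Complex.normSq (hatSlice S k i j) ≤ if (i:ℕ) = (j:ℕ) then c else 0 := by
    intro i j
    by_cases hij : (i:ℕ) = (j:ℕ)
    · rw [if_pos hij]
      obtain ⟨him, hre⟩ := (ho k).1 i j hij
      have h00 := (ho k).1 ⟨0,hn1⟩ ⟨0,hn2⟩ rfl
      have hle := (ho k).2 ⟨0,hn1⟩ i ⟨0,hn2⟩ j rfl hij (Nat.zero_le _)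
      rw [hc, Complex.normSq_apply, Complex.normSq_apply, him, h00.1]
      simp only [mul_zero, add_zero]
      nlinarith [hre, h00.2, hle]
    · rw [if_neg hij, hatSlice_fdiag hd k i j hij]
      simp
  calc ∑ i, ∑ j, Complex.normSq (hatSlice S k i j)
      ≤ ∑ i : Fin n1, ∑ j : Fin n2, (if (i:ℕ) = (j:ℕ) then c else 0) :=
        Finset.sum_le_sum fun i _ => Finset.sum_le_sum fun j _ => hterm i j
    _ ≤ ((min n1 n2 : ℕ) : ℝ) * c := count_bound c (Complex.normSq_nonneg _)

end TSVDAux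
open TSVDAux in
/-- for an ordered t-SVD `A = U * S * Vᵀ`, the leading singular tube
dominates: `‖S(1,1,:)‖_F² ≥ ‖A‖_F² / min(n1,n2)`. -/
theorem stmt_8 (n1 n2 n3 : ℕ) (hn1 : 0 < n1) (hn2 : 0 < n2)
    (A : T3 n1 n2 n3 ℝ) (U : T3 n1 n1 n3 ℝ) (S : T3 n1 n2 n3 ℝ)
    (V : T3 n2 n2 n3 ℝ) (h : IsOrderedTSVD A U S V) :
    tNorm (tube S ⟨0, hn1⟩ ⟨0, hn2⟩) ^ 2 ≥ tNorm A ^ 2 / (min n1 n2 : ℝ) := by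
  obtain ⟨⟨hU, hV, hS, hA⟩, ho⟩ := h
  have hminpos : (0:ℝ) < ((min n1 n2 : ℕ) : ℝ) := by
    exact_mod_cast lt_min hn1 hn2
  have hmincast : (min (n1:ℝ) (n2:ℝ)) = ((min n1 n2 : ℕ) : ℝ) := by
    push_cast; ring_nf
  rcases Nat.eq_zero_or_pos n3 with h3 | h3
  · subst h3
    have hz1 : tInner A A = 0 := by simp [tInner]
    have hz2 : tInner (tube S ⟨0, hn1⟩ ⟨0, hn2⟩) (tube S ⟨0, hn1⟩ ⟨0, hn2⟩) = 0 := by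
      simp [tInner]
    rw [tNorm, tNorm, hz1, hz2, Real.sqrt_zero]
    simp
  · have hIA : 0 ≤ tInner A A := by
      refine Finset.sum_nonneg fun i _ => Finset.sum_nonneg fun j _ =>
        Finset.sum_nonneg fun k _ => mul_self_nonneg _
    have hIT : 0 ≤ tInner (tube S ⟨0, hn1⟩ ⟨0, hn2⟩) (tube S ⟨0, hn1⟩ ⟨0, hn2⟩) := by
      refine Finset.sum_nonneg fun i _ => Finset.sum_nonneg fun j _ =>
        Finset.sum_nonneg fun k _ => mul_self_nonneg _
    -- Fourier-domain identities
    have hAk : ∀ k : Fin n3, hatSlice A k = hatSlice U k * hatSlice S k * (hatSlice V k)ᴴ := by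
      intro k
      rw [hA, hatSlice_tprod, hatSlice_tprod, hatSlice_tT]
    have hUk : ∀ k : Fin n3, (hatSlice U k)ᴴ * hatSlice U k = 1 := by
      intro k
      have h' := congrArg (fun X => hatSlice X k) hU.1
      rwa [hatSlice_tprod, hatSlice_tT, hatSlice_tI] at h'
    have hVk : ∀ k : Fin n3, (hatSlice V k)ᴴ * hatSlice V k = 1 := by
      intro k
      have h' := congrArg (fun X => hatSlice X k) hV.1
      rwa [hatSlice_tprod, hatSlice_tT, hatSlice_tI] at h'
    have hfrob : ∀ k : Fin n3, (∑ i, ∑ j, Complex.normSq (hatSlice A k i j))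
        = ∑ i, ∑ j, Complex.normSq (hatSlice S k i j) := by
      intro k
      rw [hAk k]
      exact frob_unitary _ _ _ (hUk k) (hVk k)
    -- Parseval for A
    have hPA : ∑ k : Fin n3, ∑ i, ∑ j, Complex.normSq (hatSlice A k i j)
        = (n3:ℝ) * tInner A A := by
      calc ∑ k : Fin n3, ∑ i, ∑ j, Complex.normSq (hatSlice A k i j)
          = ∑ i, ∑ j, ∑ k : Fin n3, Complex.normSq (hatSlice A k i j) := by
            rw [Finset.sum_comm]
            exact Finset.sum_congr rfl fun i _ => Finset.sum_comm
        _ = ∑ i, ∑ j, ((n3:ℝ) * ∑ m, (A i j m)^2) := by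
            refine Finset.sum_congr rfl fun i _ => Finset.sum_congr rfl fun j _ => ?_
            exact parsevalR h3 (fun m => A i j m)
        _ = (n3:ℝ) * tInner A A := by
            rw [tInner, Finset.mul_sum]
            refine Finset.sum_congr rfl fun i _ => ?_
            rw [Finset.mul_sum]
            refine Finset.sum_congr rfl fun j _ => ?_
            congr 1
            refine Finset.sum_congr rfl fun m _ => ?_
            rw [sq]
    -- Parseval for the leading tube
    have hPT : ∑ k : Fin n3, Complex.normSq (hatSlice S k ⟨0, hn1⟩ ⟨0, hn2⟩)
        = (n3:ℝ) * tInner (tube S ⟨0, hn1⟩ ⟨0, hn2⟩) (tube S ⟨0, hn1⟩ ⟨0, hn2⟩) := by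
      have hp := parsevalR h3 (fun m => S ⟨0, hn1⟩ ⟨0, hn2⟩ m)
      have ht : tInner (tube S ⟨0, hn1⟩ ⟨0, hn2⟩) (tube S ⟨0, hn1⟩ ⟨0, hn2⟩)
          = ∑ m, (S ⟨0, hn1⟩ ⟨0, hn2⟩ m)^2 := by
        rw [tInner]
        simp [tube, sq]
      rw [ht]
      exact hp
    have main : (n3:ℝ) * tInner A A
        ≤ ((min n1 n2 : ℕ):ℝ) * ((n3:ℝ) * tInner (tube S ⟨0, hn1⟩ ⟨0, hn2⟩) (tube S ⟨0, hn1⟩ ⟨0, hn2⟩)) := by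
      calc (n3:ℝ) * tInner A A
          = ∑ k : Fin n3, ∑ i, ∑ j, Complex.normSq (hatSlice A k i j) := hPA.symm
        _ = ∑ k : Fin n3, ∑ i, ∑ j, Complex.normSq (hatSlice S k i j) :=
            Finset.sum_congr rfl fun k _ => hfrob k
        _ ≤ ∑ k : Fin n3, ((min n1 n2 : ℕ):ℝ) * Complex.normSq (hatSlice S k ⟨0, hn1⟩ ⟨0, hn2⟩) :=
            Finset.sum_le_sum fun k _ => slice_bound hn1 hn2 S hS ho k
        _ = ((min n1 n2 : ℕ):ℝ) * ∑ k : Fin n3, Complex.normSq (hatSlice S k ⟨0, hn1⟩ ⟨0, hn2⟩) :=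
            (Finset.mul_sum _ _ _).symm
        _ = ((min n1 n2 : ℕ):ℝ) * ((n3:ℝ) * tInner (tube S ⟨0, hn1⟩ ⟨0, hn2⟩) (tube S ⟨0, hn1⟩ ⟨0, hn2⟩)) := by
            rw [hPT]
    have hcore : tInner A A
        ≤ ((min n1 n2 : ℕ):ℝ) * tInner (tube S ⟨0, hn1⟩ ⟨0, hn2⟩) (tube S ⟨0, hn1⟩ ⟨0, hn2⟩) := by
      have hn3R : (0:ℝ) < (n3:ℝ) := by exact_mod_cast h3
      have : (n3:ℝ) * tInner A A
          ≤ (n3:ℝ) * (((min n1 n2 : ℕ):ℝ) * tInner (tube S ⟨0, hn1⟩ ⟨0, hn2⟩) (tube S ⟨0, hn1⟩ ⟨0, hn2⟩)) := by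
        calc (n3:ℝ) * tInner A A ≤ _ := main
          _ = (n3:ℝ) * (((min n1 n2 : ℕ):ℝ) * tInner (tube S ⟨0, hn1⟩ ⟨0, hn2⟩) (tube S ⟨0, hn1⟩ ⟨0, hn2⟩)) := by ring
      exact le_of_mul_le_mul_left this hn3R
    rw [tNorm, tNorm, Real.sq_sqrt hIA, Real.sq_sqrt hIT, ge_iff_le, hmincast,
      div_le_iff₀ hminpos]
    calc tInner A A ≤ _ := hcore
      _ = tInner (tube S ⟨0, hn1⟩ ⟨0, hn2⟩) (tube S ⟨0, hn1⟩ ⟨0, hn2⟩) * ((min n1 n2 : ℕ):ℝ) := by ring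
end

section
/- (Lemma 2.2) Let A ∈ ℝ^{n1×n2×n3} be nonzero with an ordered t-SVD A = U * S * V^T, and let M₁ = U(:,1,:) * (S(1,1,:)/‖S(1,1,:)‖_F) * V(:,1,:)^T be the normalized leading rank-one tensor of A. Then ⟨M₁, A⟩ ≥ ‖A‖_F / √(min(n1,n2)). -/
open scoped BigOperators Matrix Kronecker ComplexConjugate
open Complex

open T3

section Aux

open T3

variable {n1 n2 n3 l m : ℕ}

lemma aux_dft_parseval (n : ℕ) (hn : n ≠ 0) (x : Fin n → ℝ) :
    ∑ k : Fin n, Complex.normSq (∑ m : Fin n, dftMatrix n k m * (x m : ℂ))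
      = n * ∑ m : Fin n, (x m)^2 := by
  set ζ : ℂ := Complex.exp (2 * (Real.pi : ℂ) * Complex.I / (n : ℂ)) with hζdef
  have hprim : IsPrimitiveRoot ζ n := Complex.isPrimitiveRoot_exp n hn
  set ω : ℂ := Complex.exp (-(2 * (Real.pi : ℂ) * Complex.I) / (n : ℂ)) with hωdef
  have hωζ : ω * ζ = 1 := by
    rw [hωdef, hζdef, ← Complex.exp_add]
    ring_nf
    exact Complex.exp_zero
  have hconjω : (starRingEnd ℂ) ω = ζ := by
    rw [hωdef, hζdef, ← Complex.exp_conj]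
    congr 1
    simp [Complex.ext_iff, neg_div]
  have key : ∀ mm mm' : Fin n,
      ∑ k : Fin n, (ω ^ ((k:ℕ)*(mm:ℕ))) * (ζ ^ ((k:ℕ)*(mm':ℕ)))
        = if mm = mm' then (n:ℂ) else 0 := by
    intro mm mm'
    have hterm : ∀ k : Fin n, (ω ^ ((k:ℕ)*(mm:ℕ))) * (ζ ^ ((k:ℕ)*(mm':ℕ)))
        = (ω ^ (mm:ℕ) * ζ ^ (mm':ℕ)) ^ (k:ℕ) := by
      intro k
      rw [mul_pow, ← pow_mul, ← pow_mul, mul_comm (mm:ℕ) (k:ℕ), mul_comm (mm':ℕ) (k:ℕ)]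
    simp only [hterm]
    set μ : ℂ := ω ^ (mm:ℕ) * ζ ^ (mm':ℕ) with hμ
    have hμn : μ ^ n = 1 := by
      have hωn : ω ^ n = 1 := by
        have : (ω * ζ) ^ n = 1 := by rw [hωζ]; simp
        rw [mul_pow, hprim.pow_eq_one] at this
        simpa using this
      rw [hμ, mul_pow, ← pow_mul, ← pow_mul, mul_comm (mm:ℕ) n, mul_comm (mm':ℕ) n,
        pow_mul, pow_mul, hωn, hprim.pow_eq_one]
      simp
    by_cases hmm : mm = mm'
    · subst hmm
      have : μ = 1 := by
        rw [hμ, ← mul_pow, hωζ, one_pow]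
      simp [this]
    · have hμ1 : μ ≠ 1 := by
        intro hc
        apply hmm
        have h1 : ω ^ (mm:ℕ) * ζ ^ (mm:ℕ) = 1 := by rw [← mul_pow, hωζ, one_pow]
        have : ζ ^ (mm':ℕ) = ζ ^ (mm:ℕ) := by
          calc ζ ^ (mm':ℕ) = (ω ^ (mm:ℕ) * ζ ^ (mm:ℕ)) * ζ ^ (mm':ℕ) := by rw [h1, one_mul]
            _ = μ * ζ ^ (mm:ℕ) := by rw [hμ]; ring
            _ = ζ ^ (mm:ℕ) := by rw [hc, one_mul]
        exact (Fin.ext (hprim.pow_inj mm'.isLt mm.isLt this)).symm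
      rw [Fin.sum_univ_eq_sum_range (fun k => μ ^ k) n, geom_sum_eq hμ1, hμn]
      simp [hmm]
  have main : ∑ k : Fin n, (∑ m : Fin n, dftMatrix n k m * (x m : ℂ)) *
      (starRingEnd ℂ) (∑ m : Fin n, dftMatrix n k m * (x m : ℂ))
      = (n : ℂ) * ∑ m : Fin n, (x m : ℂ)^2 := by
    have expand : ∀ k : Fin n, (∑ m : Fin n, dftMatrix n k m * (x m : ℂ)) *
        (starRingEnd ℂ) (∑ m : Fin n, dftMatrix n k m * (x m : ℂ))
        = ∑ m : Fin n, ∑ m' : Fin n,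
            ((ω ^ ((k:ℕ)*(m:ℕ))) * (ζ ^ ((k:ℕ)*(m':ℕ)))) * ((x m : ℂ) * (x m' : ℂ)) := by
      intro k
      rw [map_sum, Finset.sum_mul_sum]
      apply Finset.sum_congr rfl; intro m _
      apply Finset.sum_congr rfl; intro m' _
      simp only [dftMatrix, map_mul, map_pow, hconjω, Complex.conj_ofReal, ← hωdef]
      ring
    simp only [expand]
    rw [Finset.sum_comm]
    have step : ∀ m : Fin n, ∑ k : Fin n, ∑ m' : Fin n,
        ((ω ^ ((k:ℕ)*(m:ℕ))) * (ζ ^ ((k:ℕ)*(m':ℕ)))) * ((x m : ℂ) * (x m' : ℂ))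
        = (n:ℂ) * (x m : ℂ)^2 := by
      intro m
      rw [Finset.sum_comm]
      have step2 : ∀ m' : Fin n, ∑ k : Fin n,
          ((ω ^ ((k:ℕ)*(m:ℕ))) * (ζ ^ ((k:ℕ)*(m':ℕ)))) * ((x m : ℂ) * (x m' : ℂ))
          = (if m = m' then (n:ℂ) else 0) * ((x m : ℂ) * (x m' : ℂ)) := by
        intro m'
        rw [← Finset.sum_mul, key m m']
      simp only [step2, ite_mul, zero_mul, Finset.sum_ite_eq, Finset.mem_univ, if_true]
      ring
    simp only [step]
    rw [← Finset.mul_sum]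
  simp only [Complex.mul_conj] at main
  have h2 : ((∑ k : Fin n, (Complex.normSq (∑ m : Fin n, dftMatrix n k m * (x m : ℂ)) : ℝ) : ℝ) : ℂ)
      = ((n * ∑ m : Fin n, (x m)^2 : ℝ) : ℂ) := by
    push_cast
    exact main
  exact_mod_cast h2

section TAlg
variable [NeZero n3]

lemma aux_tInner_comm (A B : T3 n1 n2 n3 ℝ) : tInner A B = tInner B A := by
  unfold tInner
  simp only [mul_comm]

lemma aux_adj_left (A : T3 n1 n2 n3 ℝ) (B : T3 n2 l n3 ℝ) (C : T3 n1 l n3 ℝ) :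
    tInner (tprod A B) C = tInner B (tprod (tT A) C) := by
  have L : tInner (tprod A B) C
      = ∑ z : Fin n1 × Fin l × Fin n3 × Fin n3 × Fin n2,
          A z.1 z.2.2.2.2 (z.2.2.1 - z.2.2.2.1) * B z.2.2.2.2 z.2.1 z.2.2.2.1 * C z.1 z.2.1 z.2.2.1 := by
    unfold tInner T3.tprod
    simp only [Fintype.sum_prod_type, Finset.sum_mul]
  have R : tInner B (tprod (tT A) C)
      = ∑ z : Fin n2 × Fin l × Fin n3 × Fin n3 × Fin n1,
          B z.1 z.2.1 z.2.2.1 * (tT A z.1 z.2.2.2.2 (z.2.2.1 - z.2.2.2.1) * C z.2.2.2.2 z.2.1 z.2.2.2.1) := by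
    unfold tInner T3.tprod
    simp only [Fintype.sum_prod_type, Finset.mul_sum]
  rw [L, R]
  refine (Fintype.sum_equiv
    ⟨fun z => (z.2.2.2.2, z.2.1, z.2.2.2.1, z.2.2.1, z.1),
     fun z => (z.2.2.2.2, z.2.1, z.2.2.2.1, z.2.2.1, z.1),
     fun z => rfl, fun z => rfl⟩ _ _ ?_).symm
  rintro ⟨p, j, q, k, i⟩
  show B p j q * (tT A p i (q - k) * C i j k) = A i p (k - q) * B p j q * C i j k
  unfold tT
  rw [neg_sub]
  ring

lemma aux_adj_right (P : T3 n1 n2 n3 ℝ) (W : T3 n2 l n3 ℝ) (Q : T3 n1 l n3 ℝ) :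
    tInner (tprod P W) Q = tInner P (tprod Q (tT W)) := by
  have L : tInner (tprod P W) Q
      = ∑ z : Fin n1 × Fin l × Fin n3 × Fin n3 × Fin n2,
          P z.1 z.2.2.2.2 (z.2.2.1 - z.2.2.2.1) * W z.2.2.2.2 z.2.1 z.2.2.2.1 * Q z.1 z.2.1 z.2.2.1 := by
    unfold tInner T3.tprod
    simp only [Fintype.sum_prod_type, Finset.sum_mul]
  have R : tInner P (tprod Q (tT W))
      = ∑ z : Fin n1 × Fin n2 × Fin n3 × Fin n3 × Fin l,
          P z.1 z.2.1 z.2.2.1 * (Q z.1 z.2.2.2.2 (z.2.2.1 - z.2.2.2.1) * tT W z.2.2.2.2 z.2.1 z.2.2.2.1) := by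
    unfold tInner T3.tprod
    simp only [Fintype.sum_prod_type, Finset.mul_sum]
  rw [L, R]
  refine (Fintype.sum_equiv
    ⟨fun z => (z.1, z.2.2.2.2, z.2.2.1 - z.2.2.2.1, -z.2.2.2.1, z.2.1),
     fun z => (z.1, z.2.2.2.2, z.2.2.1 - z.2.2.2.1, -z.2.2.2.1, z.2.1),
     ?_, ?_⟩ _ _ ?_).symm
  · rintro ⟨i, p, k, q, j⟩
    simp [Prod.ext_iff, sub_neg_eq_add, sub_add_cancel]
  · rintro ⟨i, j, k, q, p⟩
    simp [Prod.ext_iff, sub_neg_eq_add, sub_add_cancel]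
  · rintro ⟨i, p, k, q, j⟩
    show P i p k * (Q i j (k - q) * tT W j p q)
      = P i p ((k - q) - (-q)) * W p j (-q) * Q i j (k - q)
    unfold tT
    rw [sub_neg_eq_add, sub_add_cancel]
    ring

lemma aux_assoc (A : T3 n1 n2 n3 ℝ) (B : T3 n2 l n3 ℝ) (C : T3 l m n3 ℝ) :
    tprod (tprod A B) C = tprod A (tprod B C) := by
  funext i j k
  have L : tprod (tprod A B) C i j k
      = ∑ z : Fin n3 × Fin l × Fin n3 × Fin n2,
          A i z.2.2.2 (k - z.1 - z.2.2.1) * B z.2.2.2 z.2.1 z.2.2.1 * C z.2.1 j z.1 := by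
    unfold T3.tprod
    simp only [Fintype.sum_prod_type, Finset.sum_mul]
  have R : tprod A (tprod B C) i j k
      = ∑ z : Fin n3 × Fin n2 × Fin n3 × Fin l,
          A i z.2.1 (k - z.1) * (B z.2.1 z.2.2.2 (z.1 - z.2.2.1) * C z.2.2.2 j z.2.2.1) := by
    unfold T3.tprod
    simp only [Fintype.sum_prod_type, Finset.mul_sum]
  rw [L, R]
  refine Fintype.sum_equiv
    ⟨fun z => (z.2.2.1 + z.1, z.2.2.2, z.1, z.2.1),
     fun z => (z.2.2.1, z.2.2.2, z.1 - z.2.2.1, z.2.1),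
     ?_, ?_⟩ _ _ ?_
  · rintro ⟨q, p, q', p'⟩
    simp [Prod.ext_iff, add_sub_cancel_right]
  · rintro ⟨q'', p', q, p⟩
    simp [Prod.ext_iff, sub_add_cancel]
  · rintro ⟨q, p, q', p'⟩
    show A i p' (k - q - q') * B p' p q' * C p j q
      = A i p' (k - (q' + q)) * (B p' p ((q' + q) - q) * C p j q)
    rw [add_sub_cancel_right, add_comm q' q, ← sub_sub]
    ring

lemma aux_tT_tT (A : T3 n1 n2 n3 ℝ) : tT (tT A) = A := by
  funext i j k
  show A i j (-(-k)) = A i j k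
  rw [neg_neg]

lemma aux_tI_tprod (X : T3 n1 n2 n3 ℝ) : tprod (tI n1 n3) X = X := by
  funext i j k
  show (∑ q : Fin n3, ∑ p : Fin n1,
      (if i = p ∧ ((k - q : Fin n3) : ℕ) = 0 then (1:ℝ) else 0) * X p j q) = X i j k
  have h1 : ∀ q : Fin n3, ∀ p : Fin n1,
      (if i = p ∧ ((k - q : Fin n3) : ℕ) = 0 then (1:ℝ) else 0) * X p j q
      = if q = k then (if p = i then X p j q else 0) else 0 := by
    intro q p
    by_cases hq : q = k
    · subst hq
      by_cases hp : p = i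
      · subst hp
        simp [sub_self]
      · have hip : i ≠ p := fun hc => hp hc.symm
        simp [hip, hp]
    · have hne : ((k - q : Fin n3) : ℕ) ≠ 0 := by
        intro hc
        have : k - q = 0 := by
          apply Fin.ext
          simpa using hc
        exact hq (sub_eq_zero.mp this).symm
      simp [hne, hq]
  simp only [h1]
  simp

lemma aux_tprod_tI (X : T3 n1 n2 n3 ℝ) : tprod X (tI n2 n3) = X := by
  funext i j k
  show (∑ q : Fin n3, ∑ p : Fin n2,
      X i p (k - q) * (if p = j ∧ (q : ℕ) = 0 then (1:ℝ) else 0)) = X i j k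
  have h1 : ∀ q : Fin n3, ∀ p : Fin n2,
      X i p (k - q) * (if p = j ∧ (q : ℕ) = 0 then (1:ℝ) else 0)
      = if q = 0 then (if p = j then X i p (k - q) else 0) else 0 := by
    intro q p
    by_cases hq : q = 0
    · subst hq
      by_cases hp : p = j
      · subst hp; simp
      · simp [hp]
    · have : (q : ℕ) ≠ 0 := fun hc => hq (Fin.ext (by simpa using hc))
      simp [this, hq]
  simp only [h1]
  simp

lemma aux_tInner_self_nonneg (A : T3 n1 n2 n3 ℝ) : 0 ≤ tInner A A := by
  unfold tInner
  apply Finset.sum_nonneg; intro i _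
  apply Finset.sum_nonneg; intro j _
  apply Finset.sum_nonneg; intro k _
  exact mul_self_nonneg _

end TAlg
end Aux

/-- Lemma 2.2: for nonzero `A` with ordered t-SVD and normalized leading
rank-one tensor `M₁`, one has `⟨M₁, A⟩ ≥ ‖A‖_F / √(min(n1,n2))`. -/
theorem stmt_9 (n1 n2 n3 : ℕ) (hn1 : 0 < n1) (hn2 : 0 < n2)
    (A : T3 n1 n2 n3 ℝ) (hA : A ≠ 0) (U : T3 n1 n1 n3 ℝ) (S : T3 n1 n2 n3 ℝ)
    (V : T3 n2 n2 n3 ℝ) (h : IsOrderedTSVD A U S V) :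
    tInner (leadM hn1 hn2 U S V) A ≥ tNorm A / Real.sqrt (min n1 n2 : ℝ) := by
  classical
  rcases Nat.eq_zero_or_pos n3 with hn3 | hn3
  · subst hn3
    exact absurd (funext fun i => funext fun j => funext fun k => k.elim0) hA
  haveI : NeZero n3 := ⟨hn3.ne'⟩
  obtain ⟨⟨hUorth, hVorth, hSdiag, hAeq⟩, hOrd⟩ := h
  have hz12 : ((⟨0, hn1⟩ : Fin n1) : ℕ) = ((⟨0, hn2⟩ : Fin n2) : ℕ) := rfl
  -- β : sum of squares of the leading tube
  set β : ℝ := ∑ k : Fin n3, (S ⟨0, hn1⟩ ⟨0, hn2⟩ k)^2 with hβdef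
  have hβnn : 0 ≤ β := Finset.sum_nonneg fun k _ => sq_nonneg _
  -- α = tNorm of leading tube = sqrt β
  have htube : tInner (tube S ⟨0, hn1⟩ ⟨0, hn2⟩) (tube S ⟨0, hn1⟩ ⟨0, hn2⟩) = β := by
    unfold tInner T3.tube
    simp only [Fin.sum_univ_one]
    rw [hβdef]
    simp [pow_two]
  have hαdef : tNorm (tube S ⟨0, hn1⟩ ⟨0, hn2⟩) = Real.sqrt β := by
    unfold tNorm; rw [htube]
  -- Parseval per pair
  have parseval : ∀ (i : Fin n1) (j : Fin n2),
      ∑ k : Fin n3, Complex.normSq (hatSlice S k i j) = (n3:ℝ) * ∑ k : Fin n3, (S i j k)^2 :=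
    fun i j => aux_dft_parseval n3 hn3.ne' (fun k => S i j k)
  -- bound for diagonal tubes
  have hdb : ∀ (i : Fin n1) (j : Fin n2), (i:ℕ) = (j:ℕ) →
      ∑ k : Fin n3, (S i j k)^2 ≤ β := by
    intro i j hij
    have hkey : ∀ k : Fin n3, Complex.normSq (hatSlice S k i j)
        ≤ Complex.normSq (hatSlice S k ⟨0, hn1⟩ ⟨0, hn2⟩) := by
      intro k
      obtain ⟨him, hre⟩ := (hOrd k).1 i j hij
      obtain ⟨him0, hre0⟩ := (hOrd k).1 ⟨0, hn1⟩ ⟨0, hn2⟩ hz12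
      have hle : (hatSlice S k i j).re ≤ (hatSlice S k ⟨0, hn1⟩ ⟨0, hn2⟩).re :=
        (hOrd k).2 ⟨0, hn1⟩ i ⟨0, hn2⟩ j hz12 hij (Nat.zero_le _)
      rw [Complex.normSq_apply, Complex.normSq_apply, him, him0]
      simpa using mul_self_le_mul_self hre hle
    have h1 : (n3:ℝ) * ∑ k : Fin n3, (S i j k)^2 ≤ (n3:ℝ) * β := by
      rw [← parseval i j, hβdef, ← parseval ⟨0, hn1⟩ ⟨0, hn2⟩]
      exact Finset.sum_le_sum fun k _ => hkey k
    have hn3pos : (0:ℝ) < (n3:ℝ) := by exact_mod_cast hn3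
    exact le_of_mul_le_mul_left h1 hn3pos
  -- diagonal count
  have hcount : (∑ i : Fin n1, ∑ j : Fin n2, (if (i:ℕ) = (j:ℕ) then (1:ℝ) else 0))
      = ((min n1 n2 : ℕ) : ℝ) := by
    have inner : ∀ i : Fin n1, (∑ j : Fin n2, (if (i:ℕ) = (j:ℕ) then (1:ℝ) else 0))
        = if (i:ℕ) < n2 then 1 else 0 := by
      intro i
      by_cases hi : (i:ℕ) < n2
      · rw [if_pos hi]
        have hiff : ∀ j : Fin n2, ((i:ℕ) = (j:ℕ)) ↔ j = ⟨(i:ℕ), hi⟩ :=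
          fun j => ⟨fun hh => Fin.ext hh.symm, fun hh => by subst hh; rfl⟩
        rw [Finset.sum_congr rfl (fun j _ => by rw [if_congr (hiff j) rfl rfl])]
        simp
      · rw [if_neg hi]
        apply Finset.sum_eq_zero; intro j _
        rw [if_neg]
        intro hc; exact hi (hc ▸ j.isLt)
    simp only [inner]
    rw [Fin.sum_univ_eq_sum_range (fun i => if i < n2 then (1:ℝ) else 0) n1,
      Finset.sum_boole]
    have : (Finset.range n1).filter (fun i => i < n2) = Finset.range (min n1 n2) := by
      ext a
      simp only [Finset.mem_filter, Finset.mem_range, lt_min_iff]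
    rw [this, Finset.card_range]
  -- tInner S S ≤ min * β
  have htSS : tInner S S ≤ ((min n1 n2 : ℕ) : ℝ) * β := by
    unfold tInner
    have hpair : ∀ (i : Fin n1) (j : Fin n2),
        (∑ k : Fin n3, S i j k * S i j k) ≤ (if (i:ℕ) = (j:ℕ) then (1:ℝ) else 0) * β := by
      intro i j
      by_cases hij : (i:ℕ) = (j:ℕ)
      · rw [if_pos hij, one_mul]
        calc (∑ k : Fin n3, S i j k * S i j k) = ∑ k : Fin n3, (S i j k)^2 := by
              simp [sq]
          _ ≤ β := hdb i j hij
      · rw [if_neg hij, zero_mul]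
        apply le_of_eq
        apply Finset.sum_eq_zero; intro k _
        rw [hSdiag i j k hij, mul_zero]
    calc (∑ i : Fin n1, ∑ j : Fin n2, ∑ k : Fin n3, S i j k * S i j k)
        ≤ ∑ i : Fin n1, ∑ j : Fin n2, (if (i:ℕ) = (j:ℕ) then (1:ℝ) else 0) * β :=
          Finset.sum_le_sum fun i _ => Finset.sum_le_sum fun j _ => hpair i j
      _ = ((min n1 n2 : ℕ) : ℝ) * β := by
          simp only [← Finset.sum_mul]
          rw [hcount]
  -- tInner A A = tInner S S
  have hAVcore : tprod A V = tprod U S := by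
    rw [hAeq, aux_assoc, hVorth.1, aux_tprod_tI]
  have hSA : tInner A A = tInner S S := by
    nth_rewrite 1 [hAeq]
    rw [aux_adj_right, aux_tT_tT, hAVcore, aux_adj_left, ← aux_assoc, hUorth.1,
      aux_tI_tprod]
  -- β > 0
  have hβpos : 0 < β := by
    rcases hβnn.lt_or_eq with hlt | heq
    · exact hlt
    · exfalso
      apply hA
      have hSS0 : tInner S S = 0 :=
        le_antisymm (by rw [← heq] at htSS; simpa using htSS) (aux_tInner_self_nonneg S)
      have hAA0 : tInner A A = 0 := by rw [hSA, hSS0]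
      funext i j k
      have hterm : A i j k * A i j k ≤ tInner A A := by
        unfold tInner
        calc A i j k * A i j k
            ≤ ∑ k' : Fin n3, A i j k' * A i j k' :=
              Finset.single_le_sum (f := fun k' : Fin n3 => A i j k' * A i j k')
                (fun _ _ => mul_self_nonneg _) (Finset.mem_univ k)
          _ ≤ ∑ j' : Fin n2, ∑ k' : Fin n3, A i j' k' * A i j' k' :=
              Finset.single_le_sum
                (f := fun j' : Fin n2 => ∑ k' : Fin n3, A i j' k' * A i j' k')
                (fun j' _ => Finset.sum_nonneg fun _ _ => mul_self_nonneg _)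
                (Finset.mem_univ j)
          _ ≤ ∑ i' : Fin n1, ∑ j' : Fin n2, ∑ k' : Fin n3, A i' j' k' * A i' j' k' :=
              Finset.single_le_sum
                (f := fun i' : Fin n1 => ∑ j' : Fin n2, ∑ k' : Fin n3, A i' j' k' * A i' j' k')
                (fun i' _ => Finset.sum_nonneg fun _ _ =>
                  Finset.sum_nonneg fun _ _ => mul_self_nonneg _)
                (Finset.mem_univ i)
      rw [hAA0] at hterm
      have := le_antisymm hterm (mul_self_nonneg _)
      exact mul_self_eq_zero.mp this
  have hαpos : 0 < Real.sqrt β := Real.sqrt_pos.mpr hβpos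
  -- tInner M₁ A = sqrt β
  have hMA : tInner (leadM hn1 hn2 U S V) A = Real.sqrt β := by
    unfold leadM
    rw [aux_adj_right, aux_tT_tT]
    have e2 : tprod A (lat V ⟨0, hn2⟩) = lat (tprod U S) ⟨0, hn2⟩ := by
      have : tprod A (lat V ⟨0, hn2⟩) = lat (tprod A V) ⟨0, hn2⟩ := rfl
      rw [this, hAVcore]
    rw [e2, aux_adj_left]
    have e4 : tprod (tT (lat U ⟨0, hn1⟩)) (lat (tprod U S) ⟨0, hn2⟩)
        = tube (tprod (tT U) (tprod U S)) ⟨0, hn1⟩ ⟨0, hn2⟩ := rfl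
    rw [e4, ← aux_assoc, hUorth.1, aux_tI_tprod, hαdef]
    unfold tInner T3.tube
    simp only [Fin.sum_univ_one]
    have : ∀ k : Fin n3, S ⟨0, hn1⟩ ⟨0, hn2⟩ k / Real.sqrt β * S ⟨0, hn1⟩ ⟨0, hn2⟩ k
        = (S ⟨0, hn1⟩ ⟨0, hn2⟩ k)^2 / Real.sqrt β := by
      intro k; ring
    rw [Finset.sum_congr rfl fun k _ => this k, ← Finset.sum_div, ← hβdef]
    rw [← Real.sq_sqrt hβnn]
    field_simp
    rw [Real.sqrt_sq hαpos.le]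
  -- finish
  rw [ge_iff_le, hMA]
  have hminpos : (0:ℝ) < Real.sqrt (min (n1:ℝ) (n2:ℝ)) := by
    apply Real.sqrt_pos.mpr
    have h1 : (1:ℝ) ≤ (n1:ℝ) := by exact_mod_cast hn1
    have h2 : (1:ℝ) ≤ (n2:ℝ) := by exact_mod_cast hn2
    exact lt_min (by linarith) (by linarith)
  rw [div_le_iff₀ hminpos]
  have hnormA : tNorm A ≤ Real.sqrt (((min n1 n2 : ℕ) : ℝ) * β) := by
    unfold tNorm
    apply Real.sqrt_le_sqrt
    rw [hSA]
    exact htSS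
  calc tNorm A ≤ Real.sqrt (((min n1 n2 : ℕ) : ℝ) * β) := hnormA
    _ = Real.sqrt ((min n1 n2 : ℕ) : ℝ) * Real.sqrt β := Real.sqrt_mul (by positivity) _
    _ = Real.sqrt β * Real.sqrt (min (n1:ℝ) (n2:ℝ)) := by
        rw [mul_comm]
        congr 1
        push_cast
        rfl
end

section
/- (Unitary invariance of the t-product) Let V ∈ ℝ^{n2×r×n3} with r ≤ n2 be partially orthogonal and let A ∈ ℝ^{n1×r×n3}. Then ‖A * V^T‖_F = ‖A‖_F. -/
open scoped BigOperators Matrix Kronecker ComplexConjugate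
open Complex

open T3


private lemma sum_swap6 {J K Q P Q' P' : Type*} [Fintype J] [Fintype K] [Fintype Q]
    [Fintype P] [Fintype Q'] [Fintype P'] (f : J → K → Q → P → Q' → P' → ℝ) :
    ∑ j, ∑ k, ∑ q, ∑ p, ∑ q', ∑ p', f j k q p q' p'
      = ∑ q, ∑ p, ∑ q', ∑ p', ∑ j, ∑ k, f j k q p q' p' := by
  calc ∑ j, ∑ k, ∑ q, ∑ p, ∑ q', ∑ p', f j k q p q' p'
      = ∑ x : J × K, ∑ y : Q × P × Q' × P', f x.1 x.2 y.1 y.2.1 y.2.2.1 y.2.2.2 := by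
        simp [Fintype.sum_prod_type]
    _ = ∑ y : Q × P × Q' × P', ∑ x : J × K, f x.1 x.2 y.1 y.2.1 y.2.2.1 y.2.2.2 :=
        Finset.sum_comm
    _ = _ := by simp [Fintype.sum_prod_type]

private lemma key_inner {n1 n2 r m : ℕ} (V : T3 n2 r (m+1) ℝ)
    (hV : PartOrth V) (A : T3 n1 r (m+1) ℝ) :
    tInner (tprod A (tT V)) (tprod A (tT V)) = tInner A A := by
  have hB : ∀ i j k, tprod A (tT V) i j k
      = ∑ q, ∑ p, A i p q * V j p (q - k) := by
    intro i j k
    show (∑ q, ∑ p, A i p (k - q) * V j p (-q)) = _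
    refine Fintype.sum_equiv (Equiv.subLeft k) _ _ fun q => ?_
    simp [Equiv.subLeft, sub_sub_cancel, neg_sub]
  have hW : ∀ (p p' : Fin r) (q q' : Fin (m+1)),
      (∑ j, ∑ k, V j p (q - k) * V j p' (q' - k))
        = if p = p' ∧ q' = q then 1 else 0 := by
    intro p p' q q'
    have h := congrFun (congrFun (congrFun hV p) p') (q' - q)
    have h2 : (∑ kk : Fin (m+1), ∑ j, V j p (-((q' - q) - kk)) * V j p' kk)
        = if p = p' ∧ ((q' - q : Fin (m+1)) : ℕ) = 0 then 1 else 0 := h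
    calc (∑ j, ∑ k, V j p (q - k) * V j p' (q' - k))
        = ∑ j, ∑ k, V j p (-((q' - q) - k)) * V j p' k := by
          refine Finset.sum_congr rfl fun j _ => ?_
          refine Fintype.sum_equiv (Equiv.subLeft q') _ _ fun k => ?_
          have e1 : q - (q' - k) = -((q' - q) - k) := by abel
          simp [Equiv.subLeft, sub_sub_cancel, e1]
      _ = ∑ kk : Fin (m+1), ∑ j, V j p (-((q' - q) - kk)) * V j p' kk :=
          Finset.sum_comm
      _ = if p = p' ∧ ((q' - q : Fin (m+1)) : ℕ) = 0 then 1 else 0 := h2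
      _ = if p = p' ∧ q' = q then 1 else 0 := by
          have e : ((q' - q : Fin (m+1)) : ℕ) = 0 ↔ q' = q := by
            constructor
            · intro h
              have h0 : q' - q = 0 := Fin.ext (by simpa using h)
              exact sub_eq_zero.mp h0
            · intro h; simp [h]
          simp [e]
  show (∑ i, ∑ j, ∑ k, tprod A (tT V) i j k * tprod A (tT V) i j k)
      = ∑ i, ∑ j, ∑ k, A i j k * A i j k
  refine Finset.sum_congr rfl fun i _ => ?_
  calc (∑ j, ∑ k, tprod A (tT V) i j k * tprod A (tT V) i j k)
      = ∑ j, ∑ k, ∑ q, ∑ p, ∑ q', ∑ p',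
          (A i p q * V j p (q - k)) * (A i p' q' * V j p' (q' - k)) := by
        refine Finset.sum_congr rfl fun j _ => Finset.sum_congr rfl fun k _ => ?_
        rw [hB]
        rw [Finset.sum_mul]
        refine Finset.sum_congr rfl fun q _ => ?_
        rw [Finset.sum_mul]
        refine Finset.sum_congr rfl fun p _ => ?_
        rw [Finset.mul_sum]
        refine Finset.sum_congr rfl fun q2 _ => ?_
        rw [Finset.mul_sum]
    _ = ∑ q, ∑ p, ∑ q', ∑ p', ∑ j, ∑ k,
          (A i p q * V j p (q - k)) * (A i p' q' * V j p' (q' - k)) := sum_swap6 _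
    _ = ∑ q, ∑ p, ∑ q', ∑ p', (A i p q * A i p' q')
          * (∑ j, ∑ k, V j p (q - k) * V j p' (q' - k)) := by
        refine Finset.sum_congr rfl fun q _ => Finset.sum_congr rfl fun p _ =>
          Finset.sum_congr rfl fun q' _ => Finset.sum_congr rfl fun p' _ => ?_
        rw [Finset.mul_sum]
        refine Finset.sum_congr rfl fun j _ => ?_
        rw [Finset.mul_sum]
        exact Finset.sum_congr rfl fun k _ => by ring
    _ = ∑ q, ∑ p, A i p q * A i p q := by
        simp only [hW]
        simp [ite_and, mul_ite]
    _ = ∑ j, ∑ k, A i j k * A i j k := Finset.sum_comm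

/-- unitary invariance of the t-product: if `V ∈ ℝ^{n2×r×n3}` is
partially orthogonal (`r ≤ n2`) and `A ∈ ℝ^{n1×r×n3}`, then `‖A * Vᵀ‖_F = ‖A‖_F`. -/
theorem stmt_12 (n1 n2 r n3 : ℕ) (hr : r ≤ n2) (V : T3 n2 r n3 ℝ) (hV : PartOrth V)
    (A : T3 n1 r n3 ℝ) :
    tNorm (tprod A (tT V)) = tNorm A := by
  cases n3 with
  | zero => simp [tNorm, tInner]
  | succ m =>
    unfold tNorm
    rw [key_inner V hV A]
end
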